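/- arXiv:1510.06803 — 6 statements merged into one kernel-verified Lean document; each statement's English description precedes it below -/
import Mathlib

section
/- Let k be a field, f ∈ k[T] separable of degree n, A = k[T]/(f), t the image of T, and d_i = a_{i+1} + a_{i+2}t + ⋯ + a_n t^{n-1-i}. Then the elements d_i/f'(t) form the dual basis of 1, t, …, t^{n-1} with respect to the trace form: Tr_{A/k}(d_i · t^j / f'(t)) = δ_{ij} for 0 ≤ i,j ≤ n-1. -/
open Polynomial Finset

open Polynomial Finset

section Key

variable {R : Type*} [CommRing R] {f : R[X]}

/-- trace of `mk P` as an explicit sum of coefficients of `X^s*P %ₘ f`. -/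
theorem trace_mk_eq (hm : f.Monic) (P : R[X]) :
    Algebra.trace R (AdjoinRoot f) (AdjoinRoot.mk f P)
      = ∑ s ∈ range f.natDegree, ((X ^ s * P) %ₘ f).coeff s := by
  classical
  have hrepr : ∀ (Q : R[X]) (p : Fin f.natDegree),
      (AdjoinRoot.powerBasis' hm).basis.repr (AdjoinRoot.mk f Q) p = (Q %ₘ f).coeff p := by
    intro Q p
    exact (AdjoinRoot.powerBasisAux'_repr_apply_to_fun hm (AdjoinRoot.mk f Q) p).trans
      (by rw [AdjoinRoot.modByMonicHom_mk])
  rw [Algebra.trace_eq_matrix_trace (AdjoinRoot.powerBasis' hm).basis, Matrix.trace]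
  rw [← Fin.sum_univ_eq_sum_range (fun s => ((X ^ s * P) %ₘ f).coeff s) f.natDegree]
  apply Finset.sum_congr rfl
  intro p _
  simp only [Matrix.diag_apply, Algebra.leftMulMatrix_apply, Algebra.coe_lmul_eq_mul,
    LinearMap.toMatrix_apply, LinearMap.mul_apply']
  rw [(AdjoinRoot.powerBasis' hm).basis_eq_pow p]
  have : AdjoinRoot.mk f P * (AdjoinRoot.powerBasis' hm).gen ^ (p : ℕ)
      = AdjoinRoot.mk f (X ^ (p : ℕ) * P) := by
    rw [AdjoinRoot.powerBasis'_gen, map_mul, map_pow, AdjoinRoot.mk_X, mul_comm]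
  rw [this]
  exact hrepr _ p

end Key

section Base

variable {k : Type*} [Field k] {f : k[X]}

-- trace of powers commutes with the base change A := AdjoinRoot f
theorem trace_root_pow_base (hm : f.Monic) (h1 : 1 ≤ f.natDegree)
    (m : ℕ) :
    Algebra.trace (AdjoinRoot f) (AdjoinRoot (f.map (algebraMap k (AdjoinRoot f))))
        (AdjoinRoot.root (f.map (algebraMap k (AdjoinRoot f))) ^ m)
      = algebraMap k (AdjoinRoot f)
          (Algebra.trace k (AdjoinRoot f) (AdjoinRoot.root f ^ m)) := by
  classical
  set A := AdjoinRoot f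
  haveI : Nontrivial A :=
    AdjoinRoot.nontrivial f (natDegree_pos_iff_degree_pos.mp (by omega)).ne'
  have hmA : (f.map (algebraMap k A)).Monic := hm.map _
  have hdegA : (f.map (algebraMap k A)).natDegree = f.natDegree :=
    hm.natDegree_map _
  have h1 : AdjoinRoot.root (f.map (algebraMap k A)) ^ m
      = AdjoinRoot.mk (f.map (algebraMap k A)) (X ^ m) := by rw [map_pow, AdjoinRoot.mk_X]
  have h2 : AdjoinRoot.root f ^ m = AdjoinRoot.mk f (X ^ m) := by
    rw [map_pow, AdjoinRoot.mk_X]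
  rw [h1, h2, trace_mk_eq hmA, trace_mk_eq hm, hdegA, map_sum]
  apply Finset.sum_congr rfl
  intro s _
  have h3 : (X : A[X]) ^ s * X ^ m = ((X : k[X]) ^ s * X ^ m).map (algebraMap k A) := by
    simp
  rw [h3, ← map_modByMonic _ hm, coeff_map]

end Base

section RankOne

variable {A : Type*} [CommRing A] [Nontrivial A] {q : A[X]}

theorem trace_mul_e (hq : q.Monic) {t : A} (ht0 : q.eval t = 0) {g : A}
    (hg : g * (q /ₘ (X - C t)).eval t = 1) (j : ℕ) :
    Algebra.trace A (AdjoinRoot q)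
      (AdjoinRoot.root q ^ j *
        (algebraMap A (AdjoinRoot q) g * AdjoinRoot.mk q (q /ₘ (X - C t)))) = t ^ j := by
  classical
  set B := AdjoinRoot q
  set D := q /ₘ (X - C t) with hD
  haveI : Module.Free A B := Module.Free.of_basis (AdjoinRoot.powerBasis' hq).basis
  haveI : Module.Finite A B := Module.Finite.of_basis (AdjoinRoot.powerBasis' hq).basis
  have hK1 : (X - C t) * D = q := by
    have h := modByMonic_add_div q (X - C t)
    rwa [modByMonic_X_sub_C_eq_C_eval, ht0, map_zero, zero_add] at h
  have haev : Polynomial.aeval t q = 0 := by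
    rwa [aeval_def, eval₂_eq_eval_map, Algebra.algebraMap_self, Polynomial.map_id]
  set ε : B →ₐ[A] A := AdjoinRoot.liftAlgHom q (Algebra.ofId A A) t (by rw [← haev]; rfl) with hε
  have hεmk : ∀ P : A[X], ε (AdjoinRoot.mk q P) = P.eval t := by
    intro P
    rw [hε, AdjoinRoot.liftAlgHom_mk]
    rfl
  have hεroot : ε (AdjoinRoot.root q) = t := by rw [hε, AdjoinRoot.liftAlgHom_root]
  set e : B := algebraMap A B g * AdjoinRoot.mk q D with he
  have heb : ∀ b : B, e * b = ε b • e := by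
    intro b
    obtain ⟨P, rfl⟩ := AdjoinRoot.mk_surjective b
    have hdvd : AdjoinRoot.mk q (D * P) = AdjoinRoot.mk q (C (P.eval t) * D) := by
      obtain ⟨Q, hQ⟩ := (X_sub_C_dvd_sub_C_eval : X - C t ∣ P - C (P.eval t))
      rw [AdjoinRoot.mk_eq_mk]
      refine ⟨Q, ?_⟩
      have h2 : D * P - C (P.eval t) * D = D * (P - C (P.eval t)) := by ring
      rw [h2, hQ, ← hK1]; ring
    calc e * AdjoinRoot.mk q P
        = algebraMap A B g * AdjoinRoot.mk q (D * P) := by rw [he, map_mul]; ring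
      _ = algebraMap A B g * (algebraMap A B (P.eval t) * AdjoinRoot.mk q D) := by
          rw [hdvd, map_mul, AdjoinRoot.mk_C, ← AdjoinRoot.algebraMap_eq]
      _ = ε (AdjoinRoot.mk q P) • e := by
          rw [hεmk, Algebra.smul_def, he]; ring
  set v : B := AdjoinRoot.root q ^ j * e with hv
  have hop : ((Algebra.lmul A B) v : B →ₗ[A] B)
      = (LinearMap.toSpanSingleton A B v) ∘ₗ ε.toLinearMap := by
    ext b
    simp only [LinearMap.coe_comp, Function.comp_apply,
      AlgHom.toLinearMap_apply, LinearMap.toSpanSingleton_apply]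
    show v * b = ε b • v
    calc v * b = AdjoinRoot.root q ^ j * (e * b) := by rw [hv]; ring
      _ = ε b • v := by rw [heb b, hv, mul_smul_comm]
  have htr : Algebra.trace A B v = ε v := by
    rw [Algebra.trace_apply, hop, LinearMap.trace_comp_comm']
    have h3 : ε.toLinearMap ∘ₗ LinearMap.toSpanSingleton A B v = ε v • LinearMap.id := by
      ext
      simp [LinearMap.toSpanSingleton_apply, mul_comm]
    rw [h3, map_smul, LinearMap.trace_id, Module.finrank_self, smul_eq_mul, Nat.cast_one,
      mul_one]
  rw [htr, hv, he, map_mul, map_mul, map_pow, hεroot, hεmk,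
    AlgHom.commutes]
  simp only [Algebra.algebraMap_self, RingHom.id_apply]
  rw [hg, mul_one]

end RankOne

section Abstract

-- purely linear-algebraic step: from the "Euler" identity to the dual basis property
theorem key_abstract {k : Type*} [Field k] {A : Type*} [CommRing A] [Algebra k A]
    (n : ℕ) (t : A) (b : Module.Basis (Fin n) k A) (hbp : ∀ p : Fin n, b p = t ^ (p : ℕ))
    (d : ℕ → A) (g : A)
    (hdag : ∀ m : ℕ, ∑ p ∈ range n,
      Algebra.trace k A (t ^ (p + m)) • (d p * g) = t ^ m)
    (i j : ℕ) (hi : i < n) (hj : j < n) :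
    Algebra.trace k A (d i * t ^ j * g) = if i = j then 1 else 0 := by
  classical
  set G : Matrix (Fin n) (Fin n) k :=
    fun p m => Algebra.trace k A (t ^ ((p : ℕ) + (m : ℕ))) with hG
  set E : Matrix (Fin n) (Fin n) k := fun p m => b.repr (d (m : ℕ) * g) p with hE
  have hEG : E * G = 1 := by
    ext p m
    have h := congrArg (fun z => b.repr z p) (hdag (m : ℕ))
    simp only [map_sum, map_smul, Finsupp.coe_smul, Finsupp.coe_finset_sum, Finset.sum_apply,
      Pi.smul_apply, smul_eq_mul] at h
    have h2 : t ^ (m : ℕ) = b m := by rw [hbp]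
    rw [h2, b.repr_self, Finsupp.single_apply] at h
    rw [← Fin.sum_univ_eq_sum_range
      (fun p' => Algebra.trace k A (t ^ (p' + (m : ℕ))) * (b.repr (d p' * g)) p) n] at h
    rw [Matrix.mul_apply, Matrix.one_apply,
      show (if p = m then (1:k) else 0) = if m = p then 1 else 0 from by simp [eq_comm], ← h]
    apply Finset.sum_congr rfl
    intro s _
    simp only [hE, hG]
    ring
  have hGE : G * E = 1 := mul_eq_one_comm.mp hEG
  have hdig : d i * t ^ j * g = ∑ p : Fin n, E p ⟨i, hi⟩ • (t ^ ((p : ℕ) + j)) := by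
    have h := b.sum_repr (d i * g)
    calc d i * t ^ j * g = (d i * g) * t ^ j := by ring
      _ = (∑ p, b.repr (d i * g) p • b p) * t ^ j := by rw [h]
      _ = ∑ p, E p ⟨i, hi⟩ • t ^ ((p : ℕ) + j) := by
          rw [Finset.sum_mul]
          apply Finset.sum_congr rfl
          intro p _
          rw [hbp, smul_mul_assoc, ← pow_add]
  rw [hdig, map_sum]
  have h3 : ∀ p : Fin n, Algebra.trace k A (E p ⟨i, hi⟩ • t ^ ((p : ℕ) + j))
      = G ⟨j, hj⟩ p * E p ⟨i, hi⟩ := by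
    intro p
    rw [map_smul, smul_eq_mul]
    simp only [hG]
    rw [Nat.add_comm (p : ℕ) j]
    ring
  rw [Finset.sum_congr rfl (fun p _ => h3 p)]
  have h4 := congrFun (congrFun hGE ⟨j, hj⟩) ⟨i, hi⟩
  rw [Matrix.mul_apply] at h4
  rw [h4, Matrix.one_apply]
  simp [Fin.ext_iff, eq_comm]

end Abstract

section KeyMonic

variable {k : Type*} [Field k] {f : k[X]}

theorem key_monic (hm : f.Monic) (h1 : 1 ≤ f.natDegree)
    (d : ℕ → AdjoinRoot f)
    (hd : ∀ i, d i = ∑ l ∈ range (f.natDegree - i),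
        f.coeff (i + 1 + l) • (AdjoinRoot.root f) ^ l)
    (g : AdjoinRoot f)
    (hg : g * AdjoinRoot.mk f (derivative f) = 1)
    (i j : ℕ) (hi : i < f.natDegree) (hj : j < f.natDegree) :
    Algebra.trace k (AdjoinRoot f) (d i * (AdjoinRoot.root f) ^ j * g)
      = if i = j then 1 else 0 := by
  classical
  haveI : Nontrivial (AdjoinRoot f) :=
    AdjoinRoot.nontrivial f (natDegree_pos_iff_degree_pos.mp (by omega)).ne'
  have hmA : (f.map (algebraMap k (AdjoinRoot f))).Monic := hm.map _
  have hdegA : (f.map (algebraMap k (AdjoinRoot f))).natDegree = f.natDegree :=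
    hm.natDegree_map _
  haveI : Module.Free k (AdjoinRoot f) :=
    Module.Free.of_basis (AdjoinRoot.powerBasis' hm).basis
  haveI : Module.Finite k (AdjoinRoot f) :=
    Module.Finite.of_basis (AdjoinRoot.powerBasis' hm).basis
  have ht0 : (f.map (algebraMap k (AdjoinRoot f))).eval (AdjoinRoot.root f) = 0 := by
    rw [eval_map, ← aeval_def, AdjoinRoot.aeval_eq, AdjoinRoot.mk_self]
  have hK1 : (X - C (AdjoinRoot.root f)) *
      (f.map (algebraMap k (AdjoinRoot f)) /ₘ (X - C (AdjoinRoot.root f)))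
      = f.map (algebraMap k (AdjoinRoot f)) := by
    have h := modByMonic_add_div (f.map (algebraMap k (AdjoinRoot f)))
      (X - C (AdjoinRoot.root f))
    rwa [modByMonic_X_sub_C_eq_C_eval, ht0, map_zero, zero_add] at h
  have hDt : (f.map (algebraMap k (AdjoinRoot f)) /ₘ (X - C (AdjoinRoot.root f))).eval
      (AdjoinRoot.root f) = AdjoinRoot.mk f (derivative f) := by
    have h := congrArg derivative hK1
    rw [derivative_mul, derivative_sub, derivative_X, derivative_C, sub_zero, one_mul] at h
    have h2 := congrArg (Polynomial.eval (AdjoinRoot.root f)) h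
    rw [eval_add, eval_mul, eval_sub, eval_X, eval_C, sub_self, zero_mul, add_zero] at h2
    rw [h2, derivative_map, eval_map, ← aeval_def, AdjoinRoot.aeval_eq]
  have hgD : g * (f.map (algebraMap k (AdjoinRoot f)) /ₘ (X - C (AdjoinRoot.root f))).eval
      (AdjoinRoot.root f) = 1 := by rw [hDt]; exact hg
  have hR1 := fun m => trace_mul_e hmA ht0 hgD m
  -- coefficients of D
  have hDco : ∀ m, m < f.natDegree →
      (f.map (algebraMap k (AdjoinRoot f)) /ₘ (X - C (AdjoinRoot.root f))).coeff m = d m := by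
    intro m hmn
    rw [coeff_divByMonic_X_sub_C, hdegA, hd, ← Finset.Ico_add_one_right_eq_Icc, Finset.sum_Ico_eq_sum_range]
    have hrange : f.natDegree + 1 - (m + 1) = f.natDegree - m := by omega
    rw [hrange]
    apply Finset.sum_congr rfl
    intro l _
    rw [show m + 1 + l - (m + 1) = l by omega, coeff_map, mul_comm, ← Algebra.smul_def]
  have hDdeg : (f.map (algebraMap k (AdjoinRoot f)) /ₘ (X - C (AdjoinRoot.root f))).natDegree
      < f.natDegree := by
    rw [natDegree_divByMonic _ (monic_X_sub_C (AdjoinRoot.root f)), hdegA, natDegree_X_sub_C]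
    omega
  have hmkD : AdjoinRoot.mk (f.map (algebraMap k (AdjoinRoot f)))
      (f.map (algebraMap k (AdjoinRoot f)) /ₘ (X - C (AdjoinRoot.root f)))
      = ∑ m ∈ range f.natDegree,
          d m • (AdjoinRoot.root (f.map (algebraMap k (AdjoinRoot f)))) ^ m := by
    conv_lhs => rw [(f.map (algebraMap k (AdjoinRoot f)) /ₘ
      (X - C (AdjoinRoot.root f))).as_sum_range' f.natDegree hDdeg]
    rw [map_sum]
    apply Finset.sum_congr rfl
    intro m hmr
    rw [← C_mul_X_pow_eq_monomial, map_mul, AdjoinRoot.mk_C, ← AdjoinRoot.algebraMap_eq,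
      map_pow, AdjoinRoot.mk_X, ← Algebra.smul_def, hDco m (mem_range.mp hmr)]
  have hdag : ∀ m : ℕ,
      ∑ p ∈ range f.natDegree,
        Algebra.trace k (AdjoinRoot f) ((AdjoinRoot.root f) ^ (p + m)) • (d p * g)
        = (AdjoinRoot.root f) ^ m := by
    intro m
    have h := hR1 m
    rw [hmkD, Finset.mul_sum, Finset.mul_sum, map_sum] at h
    rw [← h]
    apply Finset.sum_congr rfl
    intro p _
    have h2 : (AdjoinRoot.root (f.map (algebraMap k (AdjoinRoot f)))) ^ m *
        (algebraMap (AdjoinRoot f) (AdjoinRoot (f.map (algebraMap k (AdjoinRoot f)))) g *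
          (d p • (AdjoinRoot.root (f.map (algebraMap k (AdjoinRoot f)))) ^ p))
        = (d p * g) • (AdjoinRoot.root (f.map (algebraMap k (AdjoinRoot f)))) ^ (p + m) := by
      rw [Algebra.smul_def, Algebra.smul_def, map_mul, pow_add]; ring
    rw [h2, map_smul, trace_root_pow_base hm h1, Algebra.smul_def, Algebra.smul_def]
    simp only [Algebra.algebraMap_self, RingHom.id_apply]
    ring
  exact key_abstract f.natDegree (AdjoinRoot.root f) (AdjoinRoot.powerBasis' hm).basis
    (fun p => ((AdjoinRoot.powerBasis' hm).basis_eq_pow p).trans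
      (by rw [AdjoinRoot.powerBasis'_gen]))
    d g hdag i j hi hj

end KeyMonic

-- wrapper: key_monic stated in quotient-ring language
theorem key_monic' {k : Type*} [Field k] {f : Polynomial k} (hm : f.Monic)
    (h1 : 1 ≤ f.natDegree)
    (d : ℕ → Polynomial k ⧸ Ideal.span {f})
    (hd : ∀ i, d i = ∑ l ∈ Finset.range (f.natDegree - i),
        f.coeff (i + 1 + l) • (Ideal.Quotient.mk (Ideal.span {f}) Polynomial.X) ^ l)
    (g : Polynomial k ⧸ Ideal.span {f})
    (hg : g * Ideal.Quotient.mk (Ideal.span {f}) (Polynomial.derivative f) = 1)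
    (i j : ℕ) (hi : i < f.natDegree) (hj : j < f.natDegree) :
    Algebra.trace k (Polynomial k ⧸ Ideal.span {f})
      (d i * (Ideal.Quotient.mk (Ideal.span {f}) Polynomial.X) ^ j * g)
      = if i = j then 1 else 0 :=
  key_monic hm h1 d hd g hg i j hi hj

/-- For a separable polynomial `f` of degree `n` over a field `k`, with `A = k[T]/(f)`,
`t` the image of `T`, `dᵢ = a_{i+1} + a_{i+2} t + ⋯ + aₙ t^{n-1-i}`, and `g = f'(t)⁻¹`,
the elements `dᵢ / f'(t)` form the dual basis of `1, t, …, t^{n-1}` with respect to the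
trace form: `Tr_{A/k}(dᵢ tʲ / f'(t)) = δᵢⱼ`. -/
theorem trace_dual_basis
    (k : Type*) [Field k] (f : k[X]) (n : ℕ) (hn : f.natDegree = n) (h1 : 1 ≤ n)
    (hsep : f.Separable)
    (t : k[X] ⧸ Ideal.span {f}) (ht : t = Ideal.Quotient.mk (Ideal.span {f}) X)
    (d : ℕ → k[X] ⧸ Ideal.span {f})
    (hd : ∀ i, d i = ∑ j ∈ range (n - i), f.coeff (i + 1 + j) • t ^ j)
    (g : k[X] ⧸ Ideal.span {f})
    (hg : g * Ideal.Quotient.mk (Ideal.span {f}) (derivative f) = 1)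
    (i j : ℕ) (hi : i < n) (hj : j < n) :
    Algebra.trace k (k[X] ⧸ Ideal.span {f}) (d i * t ^ j * g)
      = if i = j then 1 else 0 := by
  subst hn
  have hf0 : f ≠ 0 := fun h => by simp [h] at h1
  have hc : f.leadingCoeff ≠ 0 := leadingCoeff_ne_zero.mpr hf0
  have hm : (f * C f.leadingCoeff⁻¹).Monic := monic_mul_leadingCoeff_inv hf0
  have hu : IsUnit (C f.leadingCoeff⁻¹ : k[X]) :=
    isUnit_C.mpr (isUnit_iff_ne_zero.mpr (inv_ne_zero hc))
  have hassoc : Associated f (f * C f.leadingCoeff⁻¹) := ⟨hu.unit, by simp⟩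
  have hspan : Ideal.span ({f} : Set k[X]) = Ideal.span {f * C f.leadingCoeff⁻¹} :=
    Ideal.span_singleton_eq_span_singleton.mpr hassoc
  have hdeg : (f * C f.leadingCoeff⁻¹).natDegree = f.natDegree :=
    natDegree_mul_C (inv_ne_zero hc)
  revert ht hd hg
  revert t d g
  rw [hspan]
  intro t d g ht hg hd
  subst ht
  have hder : derivative (f * C f.leadingCoeff⁻¹) = derivative f * C f.leadingCoeff⁻¹ := by
    rw [derivative_mul, derivative_C, mul_zero, add_zero]
  have key := key_monic' hm (by omega : 1 ≤ (f * C f.leadingCoeff⁻¹).natDegree)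
    (fun m => f.leadingCoeff⁻¹ • d m)
    (by
      intro m
      show f.leadingCoeff⁻¹ • d m = _
      rw [hd m, Finset.smul_sum, hdeg]
      apply Finset.sum_congr rfl
      intro l _
      rw [smul_smul, coeff_mul_C, mul_comm f.leadingCoeff⁻¹ (f.coeff (m + 1 + l))])
    (f.leadingCoeff • g)
    (by
      have hmkC : Ideal.Quotient.mk (Ideal.span {f * C f.leadingCoeff⁻¹}) (C f.leadingCoeff⁻¹)
          = algebraMap k (k[X] ⧸ Ideal.span {f * C f.leadingCoeff⁻¹}) f.leadingCoeff⁻¹ := by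
        rw [IsScalarTower.algebraMap_apply k k[X] (k[X] ⧸ Ideal.span {f * C f.leadingCoeff⁻¹}),
          Ideal.Quotient.algebraMap_eq, Polynomial.algebraMap_eq]
      have hmkder : Ideal.Quotient.mk (Ideal.span {f * C f.leadingCoeff⁻¹})
          (derivative (f * C f.leadingCoeff⁻¹))
          = f.leadingCoeff⁻¹ • Ideal.Quotient.mk (Ideal.span {f * C f.leadingCoeff⁻¹})
              (derivative f) := by
        rw [hder, map_mul, hmkC]
        exact (mul_comm _ _).trans (Algebra.smul_def (R := k) (A := k[X] ⧸ Ideal.span {f * C f.leadingCoeff⁻¹}) _ _).symm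
      rw [hmkder, smul_mul_assoc, mul_smul_comm, smul_smul, mul_inv_cancel₀ hc, one_smul]
      exact hg)
    i j (by omega) (by omega)
  have hconv : d i * (Ideal.Quotient.mk (Ideal.span {f * C f.leadingCoeff⁻¹}) X) ^ j * g
      = (f.leadingCoeff⁻¹ • d i) *
          (Ideal.Quotient.mk (Ideal.span {f * C f.leadingCoeff⁻¹}) X) ^ j *
          (f.leadingCoeff • g) := by
    rw [smul_mul_assoc, smul_mul_assoc, mul_smul_comm, smul_smul,
      inv_mul_cancel₀ hc, one_smul]
  rw [hconv]
  exact key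
end

section
/- Let k be a field of characteristic 2, f(T) = Σ a_i T^i ∈ k[T] separable of degree n, A = k[T]/(f), and d_i as above (with the convention a_i = 0 for i < 0 or i > n). If r₀d₀ + ⋯ + r_{n-1}d_{n-1} = (s₀d₀ + ⋯ + s_{n-1}d_{n-1})² in A, then r_k = Σ_{j=0}^{n-1} s_j² a_{2j+1-k} for every k = 0,…,n-1. -/
open Polynomial Finset

section Aux

variable {k : Type*} [Field k]

/-- Auxiliary polynomials `D i = ∑_{u < n-i} a_{i+1+u} X^u` representing the `dᵢ`. -/
noncomputable def auxD (f : k[X]) (n i : ℕ) : k[X] :=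
  ∑ u ∈ range (n - i), f.coeff (i + 1 + u) • X ^ u

lemma auxD_split (f : k[X]) (n : ℕ) (hn : f.natDegree = n) (i : ℕ) :
    f = X ^ (i + 1) * auxD f n i + ∑ m ∈ range (i + 1), f.coeff m • X ^ m := by
  set N := max (n + 1) (i + 1) with hN
  have hf : f = ∑ m ∈ range N, f.coeff m • X ^ m := by
    conv_lhs => rw [f.as_sum_range' N (by omega)]
    simp [smul_eq_C_mul, Polynomial.C_mul_X_pow_eq_monomial]
  have hsplit := Finset.sum_range_add_sum_Ico (fun m => f.coeff m • (X : k[X]) ^ m)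
    (show i + 1 ≤ N by omega)
  have hIco : ∑ m ∈ Ico (i+1) N, f.coeff m • X ^ m = X ^ (i + 1) * auxD f n i := by
    rw [Finset.sum_Ico_eq_sum_range]
    have hNe : N - (i + 1) = n - i := by omega
    rw [hNe, auxD, Finset.mul_sum]
    refine Finset.sum_congr rfl fun u _ => ?_
    rw [mul_smul_comm, ← pow_add]
  calc f = ∑ m ∈ range N, f.coeff m • X ^ m := hf
    _ = ∑ m ∈ range (i+1), f.coeff m • (X:k[X]) ^ m
        + ∑ m ∈ Ico (i+1) N, f.coeff m • X ^ m := hsplit.symm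
    _ = _ := by rw [hIco]; ring

lemma char2_diag {R : Type*} [CommRing R] [CharP R 2] (j : ℕ) (g : ℕ → ℕ → R)
    (hg : ∀ l m, g l m = g m l) :
    ∑ l ∈ range (2*j+2), ∑ m ∈ range (2*j+2 - l), g l m = ∑ m ∈ range (j+1), g m m := by
  rw [Finset.sum_sigma' (range (2*j+2)) (fun l => range (2*j+2 - l)) (fun l m => g l m)]
  set S := (range (2*j+2)).sigma (fun l => range (2*j+2 - l)) with hS
  rw [← Finset.sum_filter_add_sum_filter_not S (fun p => p.1 = p.2) (fun p => g p.1 p.2)]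
  have hoff : ∑ p ∈ S.filter (fun p => ¬ p.1 = p.2), g p.1 p.2 = 0 := by
    apply Finset.sum_involution (fun p _ => (⟨p.2, p.1⟩ : (_ : ℕ) × ℕ))
    · intro p hp
      exact (by rw [hg p.2 p.1] : g p.1 p.2 + g p.2 p.1 = g p.1 p.2 + g p.1 p.2).trans
        (CharTwo.add_self_eq_zero _)
    · rintro ⟨a, b⟩ hp _
      simp only [Finset.mem_filter] at hp
      intro hcon
      have h1 := congrArg Sigma.fst hcon
      simp only at h1
      exact hp.2 h1.symm
    · rintro ⟨a, b⟩ hp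
      simp only [Finset.mem_filter, hS, Finset.mem_sigma, Finset.mem_range] at hp ⊢
      refine ⟨⟨by omega, by omega⟩, fun hcon => hp.2 hcon.symm⟩
    · rintro ⟨a, b⟩ hp
      rfl
  rw [hoff, add_zero]
  refine Finset.sum_bij (fun p _ => p.1) ?_ ?_ ?_ ?_
  · rintro ⟨a, b⟩ hp
    simp only [Finset.mem_filter, hS, Finset.mem_sigma, Finset.mem_range] at hp
    simp only [Finset.mem_range]
    omega
  · rintro ⟨a, b⟩ hp ⟨c, e⟩ hq hpq
    simp only [Finset.mem_filter] at hp hq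
    simp only at hpq hp hq
    subst hpq
    rw [← hp.2, ← hq.2]
  · intro m hm
    simp only [Finset.mem_range] at hm
    refine ⟨⟨m, m⟩, ?_, rfl⟩
    simp only [Finset.mem_filter, hS, Finset.mem_sigma, Finset.mem_range]
    exact ⟨⟨by omega, by omega⟩, trivial⟩
  · rintro ⟨a, b⟩ hp
    simp only [Finset.mem_filter] at hp
    simp only at hp ⊢
    rw [hp.2]

lemma auxD_sq [CharP k 2] (f : k[X]) (n : ℕ) (hn : f.natDegree = n) (j : ℕ) :
    (auxD f n j)^2
      = (∑ l ∈ range (2*j+2), f.coeff l • auxD f n (2*j+1-l)) + f * auxD f n (2*j+1) := by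
  set L : k[X] := ∑ m ∈ range (j+1), (f.coeff m * f.coeff m) • X ^ (m + m) with hL
  have e1 : f^2 = X^(2*j+2) * (auxD f n j)^2 + L := by
    conv_lhs => rw [auxD_split f n hn j]
    rw [CharTwo.add_sq, mul_pow, ← pow_mul, sum_pow_char]
    have hexp : (j+1)*2 = 2*j+2 := by ring
    rw [hexp, hL]
    congr 1
    refine Finset.sum_congr rfl fun m _ => ?_
    rw [_root_.smul_pow, pow_two (f.coeff m), ← pow_mul, mul_two]
  have e2 : f^2 = X^(2*j+2) * ((∑ l ∈ range (2*j+2), f.coeff l • auxD f n (2*j+1-l))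
      + f * auxD f n (2*j+1)) + L := by
    have hsplit1 := auxD_split f n hn (2*j+1)
    have h21 : 2*j+1+1 = 2*j+2 := by ring
    rw [h21] at hsplit1
    calc f^2 = f * f := sq f
      _ = f * (X^(2*j+2) * auxD f n (2*j+1))
          + ∑ l ∈ range (2*j+2), f.coeff l • (X ^ l * f) := by
            conv_lhs => rw [show f * f = f * (X^(2*j+2) * auxD f n (2*j+1)
              + ∑ m ∈ range (2*j+2), f.coeff m • X ^ m) from by rw [← hsplit1]]
            rw [mul_add, Finset.mul_sum]
            congr 1
            refine Finset.sum_congr rfl fun l _ => ?_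
            rw [mul_smul_comm, mul_comm f (X ^ l)]
      _ = f * (X^(2*j+2) * auxD f n (2*j+1))
          + (∑ l ∈ range (2*j+2), f.coeff l • (X^(2*j+2) * auxD f n (2*j+1-l)))
          + ∑ l ∈ range (2*j+2), ∑ m ∈ range (2*j+2-l),
              (f.coeff l * f.coeff m) • X ^ (l + m) := by
            rw [add_assoc]
            congr 1
            rw [← Finset.sum_add_distrib]
            refine Finset.sum_congr rfl fun l hl => ?_
            rw [Finset.mem_range] at hl
            have hsl := auxD_split f n hn (2*j+1-l)
            have hexp : 2*j+1-l+1 = 2*j+2-l := by omega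
            rw [hexp] at hsl
            rw [show X ^ l * f = X^(2*j+2) * auxD f n (2*j+1-l)
                + ∑ m ∈ range (2*j+2-l), (f.coeff m) • X ^ (l + m) from ?_]
            · rw [smul_add, Finset.smul_sum]
              congr 1
              refine Finset.sum_congr rfl fun m _ => ?_
              rw [smul_smul]
            · conv_lhs => rw [hsl]
              rw [mul_add, Finset.mul_sum, ← mul_assoc, ← pow_add,
                show l + (2*j+2-l) = 2*j+2 from by omega]
              congr 1
              refine Finset.sum_congr rfl fun m _ => ?_
              rw [mul_smul_comm, ← pow_add]
      _ = X^(2*j+2) * ((∑ l ∈ range (2*j+2), f.coeff l • auxD f n (2*j+1-l))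
          + f * auxD f n (2*j+1)) + L := by
            rw [char2_diag j (fun l m => (f.coeff l * f.coeff m) • X ^ (l + m))
              (fun l m => by beta_reduce; rw [mul_comm (f.coeff l), add_comm l])]
            rw [← hL, mul_add, Finset.mul_sum]
            have : ∀ l, f.coeff l • (X^(2*j+2) * auxD f n (2*j+1-l))
                = X^(2*j+2) * (f.coeff l • auxD f n (2*j+1-l)) := fun l => (mul_smul_comm _ _ _).symm
            simp_rw [this]
            ring
  have e3 := e1.symm.trans e2
  rw [add_left_inj] at e3
  exact mul_left_cancel₀ (pow_ne_zero _ X_ne_zero) e3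

lemma auxD_zero (f : k[X]) (n i : ℕ) (h : n ≤ i) : auxD f n i = 0 := by
  rw [auxD, Nat.sub_eq_zero_of_le h]
  simp

lemma auxD_sq' [CharP k 2] (f : k[X]) (n : ℕ) (hn : f.natDegree = n) (j : ℕ) :
    (auxD f n j)^2
      = (∑ kk ∈ range n, (if kk ≤ 2*j+1 then f.coeff (2*j+1-kk) else 0) • auxD f n kk)
        + f * auxD f n (2*j+1) := by
  rw [auxD_sq f n hn j]
  congr 1
  set N := max n (2*j+2) with hN
  have step1 : ∑ l ∈ range (2*j+2), f.coeff l • auxD f n (2*j+1-l)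
      = ∑ kk ∈ range (2*j+2), (if kk ≤ 2*j+1 then f.coeff (2*j+1-kk) else 0) • auxD f n kk := by
    have hrefl := Finset.sum_range_reflect
      (fun kk => (if kk ≤ 2*j+1 then f.coeff (2*j+1-kk) else 0) • auxD f n kk) (2*j+2)
    rw [← hrefl]
    refine Finset.sum_congr rfl fun l hl => ?_
    rw [Finset.mem_range] at hl
    have h1 : 2*j+2-1-l = 2*j+1-l := by omega
    have h2 : 2*j+1-l ≤ 2*j+1 := by omega
    have h3 : 2*j+1-(2*j+1-l) = l := by omega
    rw [h1, if_pos h2, h3]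
  rw [step1]
  have ext1 : ∑ kk ∈ range (2*j+2), (if kk ≤ 2*j+1 then f.coeff (2*j+1-kk) else 0) • auxD f n kk
      = ∑ kk ∈ range N, (if kk ≤ 2*j+1 then f.coeff (2*j+1-kk) else 0) • auxD f n kk := by
    refine Finset.sum_subset (Finset.range_subset_range.mpr (by omega)) ?_
    intro kk _ hkk
    rw [Finset.mem_range, not_lt] at hkk
    rw [if_neg (by omega), zero_smul]
  have ext2 : ∑ kk ∈ range n, (if kk ≤ 2*j+1 then f.coeff (2*j+1-kk) else 0) • auxD f n kk
      = ∑ kk ∈ range N, (if kk ≤ 2*j+1 then f.coeff (2*j+1-kk) else 0) • auxD f n kk := by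
    refine Finset.sum_subset (Finset.range_subset_range.mpr (by omega)) ?_
    intro kk _ hkk
    rw [Finset.mem_range, not_lt] at hkk
    rw [auxD_zero f n kk hkk, smul_zero]
  rw [ext1, ← ext2]

lemma auxD_degree_lt (f : k[X]) (n i : ℕ) : (auxD f n i).degree < (n : ℕ) := by
  rw [auxD]
  refine lt_of_le_of_lt (Polynomial.degree_sum_le _ _) ?_
  rw [Finset.sup_lt_iff (by exact_mod_cast WithBot.bot_lt_coe _)]
  intro u hu
  rw [Finset.mem_range] at hu
  refine lt_of_le_of_lt (Polynomial.degree_smul_le _ _) ?_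
  refine lt_of_le_of_lt (Polynomial.degree_X_pow_le u) ?_
  exact_mod_cast Nat.lt_of_lt_of_le hu (Nat.sub_le _ _)

lemma auxD_coeff (f : k[X]) (n i p : ℕ) :
    (auxD f n i).coeff p = if p < n - i then f.coeff (i + 1 + p) else 0 := by
  rw [auxD, Polynomial.finset_sum_coeff]
  have : ∀ u ∈ range (n - i), (f.coeff (i + 1 + u) • (X:k[X]) ^ u).coeff p
      = if u = p then f.coeff (i + 1 + u) else 0 := by
    intro u _
    rw [Polynomial.coeff_smul, Polynomial.coeff_X_pow, smul_eq_mul, mul_ite, mul_one, mul_zero]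
    simp only [eq_comm]
  rw [Finset.sum_congr rfl this, Finset.sum_ite_eq' (range (n - i)) p
    (fun u => f.coeff (i + 1 + u))]
  simp [Finset.mem_range]

lemma auxD_indep (f : k[X]) (n : ℕ) (hn : f.natDegree = n) (h1 : 1 ≤ n) (c : ℕ → k)
    (hc : (∑ kk ∈ range n, c kk • auxD f n kk) ∈ Ideal.span {f}) :
    ∀ i, i < n → c i = 0 := by
  set g := ∑ kk ∈ range n, c kk • auxD f n kk with hg
  have hf0 : f ≠ 0 := fun h => by rw [h] at hn; simp at hn; omega
  have hdvd : f ∣ g := Ideal.mem_span_singleton.mp hc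
  have hdeg : g.degree < f.degree := by
    rw [Polynomial.degree_eq_natDegree hf0, hn]
    refine lt_of_le_of_lt (Polynomial.degree_sum_le _ _) ?_
    rw [Finset.sup_lt_iff (by exact_mod_cast WithBot.bot_lt_coe _)]
    intro kk _
    exact lt_of_le_of_lt (Polynomial.degree_smul_le _ _) (auxD_degree_lt f n kk)
  have hg0 : g = 0 := Polynomial.eq_zero_of_dvd_of_degree_lt hdvd hdeg
  have hcoeff : ∀ p, g.coeff p = ∑ kk ∈ range n,
      c kk * (if p < n - kk then f.coeff (kk + 1 + p) else 0) := by
    intro p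
    rw [hg, Polynomial.finset_sum_coeff]
    refine Finset.sum_congr rfl fun kk _ => ?_
    rw [Polynomial.coeff_smul, auxD_coeff, smul_eq_mul]
  intro i
  induction i using Nat.strong_induction_on with
  | _ i ih =>
    intro hi
    have h0 := hcoeff (n - 1 - i)
    rw [hg0, Polynomial.coeff_zero] at h0
    replace h0 := h0.symm
    rw [Finset.sum_eq_single i ?_ ?_] at h0
    · rw [if_pos (by omega), show i + 1 + (n - 1 - i) = n from by omega] at h0
      have hlc : f.coeff n ≠ 0 := by
        rw [← hn]
        exact Polynomial.leadingCoeff_ne_zero.mpr hf0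
      rcases mul_eq_zero.mp h0 with h | h
      · exact h
      · exact absurd h hlc
    · intro kk hkk hne
      rw [Finset.mem_range] at hkk
      rcases Nat.lt_or_ge kk i with hlt | hge
      · rw [ih kk hlt (by omega), zero_mul]
      · rw [if_neg (by omega), mul_zero]
    · intro hcon
      exact absurd (Finset.mem_range.mpr hi) hcon

end Aux

/-- Squaring formula in the basis `d₀, …, d_{n-1}` of `A = k[T]/(f)` over a field of
characteristic 2: if `∑ rᵢ dᵢ = (∑ sᵢ dᵢ)²` then `r_k = ∑ⱼ sⱼ² a_{2j+1-k}`,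
with the convention that `aᵢ = 0` for `i < 0` or `i > n` (the coefficients of `f`
outside its degree range vanish). -/
theorem square_in_d_basis
    (k : Type*) [Field k] [CharP k 2] (f : k[X]) (n : ℕ) (hn : f.natDegree = n)
    (h1 : 1 ≤ n) (hsep : f.Separable)
    (t : k[X] ⧸ Ideal.span {f}) (ht : t = Ideal.Quotient.mk (Ideal.span {f}) X)
    (d : ℕ → k[X] ⧸ Ideal.span {f})
    (hd : ∀ i, d i = ∑ j ∈ range (n - i), f.coeff (i + 1 + j) • t ^ j)
    (r s : ℕ → k)
    (h : ∑ i ∈ range n, r i • d i = (∑ i ∈ range n, s i • d i) ^ 2)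
    (κ : ℕ) (hκ : κ < n) :
    r κ = ∑ j ∈ range n,
      (s j) ^ 2 * (if κ ≤ 2 * j + 1 then f.coeff (2 * j + 1 - κ) else 0) := by
  have hf0 : f ≠ 0 := fun hc => by rw [hc] at hn; simp at hn; omega
  have hItop : Ideal.span {f} ≠ ⊤ := by
    rw [Ne, Ideal.span_singleton_eq_top]
    exact Polynomial.not_isUnit_of_natDegree_pos f (by omega)
  haveI : Nontrivial (k[X] ⧸ Ideal.span {f}) := Ideal.Quotient.nontrivial_iff.mpr hItop
  haveI : CharP (k[X] ⧸ Ideal.span {f}) 2 :=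
    charP_of_injective_algebraMap (algebraMap k (k[X] ⧸ Ideal.span {f})).injective 2
  -- the images of the auxiliary polynomials are the `d i`
  have hmk : ∀ i, Ideal.Quotient.mk (Ideal.span {f}) (auxD f n i) = d i := by
    intro i
    rw [hd i, auxD, ← Ideal.Quotient.mkₐ_eq_mk k, map_sum]
    refine Finset.sum_congr rfl fun u _ => ?_
    rw [map_smul, map_pow, Ideal.Quotient.mkₐ_eq_mk, ← ht]
  have hmkf : Ideal.Quotient.mk (Ideal.span {f}) f = 0 :=
    Ideal.Quotient.eq_zero_iff_mem.mpr (Ideal.subset_span (Set.mem_singleton f))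
  -- the squaring identity in the quotient
  have hsq : ∀ j, (d j) ^ 2
      = ∑ kk ∈ range n, (if kk ≤ 2*j+1 then f.coeff (2*j+1-kk) else 0) • d kk := by
    intro j
    have := congrArg (Ideal.Quotient.mk (Ideal.span {f})) (auxD_sq' f n hn j)
    rw [map_pow, hmk, map_add, map_mul, hmkf, zero_mul, add_zero,
      ← Ideal.Quotient.mkₐ_eq_mk k, map_sum] at this
    rw [this]
    refine Finset.sum_congr rfl fun kk _ => ?_
    rw [map_smul, Ideal.Quotient.mkₐ_eq_mk, hmk]
  -- expand the square of the sum
  set c : ℕ → k := fun kk => ∑ j ∈ range n,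
    (s j) ^ 2 * (if kk ≤ 2*j+1 then f.coeff (2*j+1-kk) else 0) with hc
  have hrhs : (∑ i ∈ range n, s i • d i) ^ 2 = ∑ kk ∈ range n, c kk • d kk := by
    rw [sum_pow_char]
    have expand : ∀ j, (s j • d j) ^ 2
        = ∑ kk ∈ range n, ((s j)^2 * (if kk ≤ 2*j+1 then f.coeff (2*j+1-kk) else 0)) • d kk := by
      intro j
      rw [_root_.smul_pow, hsq j, Finset.smul_sum]
      refine Finset.sum_congr rfl fun kk _ => ?_
      rw [smul_smul]
    rw [Finset.sum_congr rfl fun j _ => expand j, Finset.sum_comm]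
    refine Finset.sum_congr rfl fun kk _ => ?_
    rw [hc, Finset.sum_smul]
  -- difference of coefficients annihilates the `d` basis
  have hdiff : ∑ kk ∈ range n, (r kk - c kk) • d kk = 0 := by
    have : ∑ kk ∈ range n, (r kk - c kk) • d kk
        = (∑ kk ∈ range n, r kk • d kk) - ∑ kk ∈ range n, c kk • d kk := by
      rw [← Finset.sum_sub_distrib]
      refine Finset.sum_congr rfl fun kk _ => ?_
      rw [sub_smul]
    rw [this, h, hrhs, sub_self]
  -- pull back to polynomials and use independence
  have hmem : (∑ kk ∈ range n, (r kk - c kk) • auxD f n kk) ∈ Ideal.span {f} := by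
    rw [← Ideal.Quotient.eq_zero_iff_mem, ← Ideal.Quotient.mkₐ_eq_mk k, map_sum]
    rw [show ∑ kk ∈ range n, (Ideal.Quotient.mkₐ k (Ideal.span {f})) ((r kk - c kk) • auxD f n kk)
        = ∑ kk ∈ range n, (r kk - c kk) • d kk from ?_, hdiff]
    refine Finset.sum_congr rfl fun kk _ => ?_
    rw [map_smul, Ideal.Quotient.mkₐ_eq_mk, hmk]
  have h2 : r κ - c κ = 0 := auxD_indep f n hn h1 (fun kk => r kk - c kk) hmem κ hκ
  rw [sub_eq_zero] at h2
  simpa only [hc] using h2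
end

section
/- Let k be a field of characteristic 2 and E a k-vector space of odd dimension n = 2m+1 with basis w₀,…,w_m, v₀,…,v_{m-1}. Let (b₀,b₁) be the basic singular pair of alternating bilinear forms given by b₀(w_i,v_j) = δ_{i,j+1}, b₁(w_i,v_j) = δ_{ij}, and all other pairings among basis vectors zero. Then for (λ,μ) ≠ (0,0), the radical of λb₀ + μb₁ is one-dimensional, spanned by Ω(λ,μ) = Σ_{i=0}^m λ^{m-i}μ^i w_i. -/
/-- The first alternating bilinear form `b₀` of the basic singular pair on
`E = span(w₀,…,w_m) ⊕ span(v₀,…,v_{m-1})`, with `b₀(wᵢ, vⱼ) = δ_{i,j+1}` and all other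
pairings among basis vectors zero. -/
def basicSingB0 (k : Type*) [Field k] (m : ℕ)
    (z w : (Fin (m + 1) → k) × (Fin m → k)) : k :=
  ∑ j : Fin m, (z.1 j.succ * w.2 j + w.1 j.succ * z.2 j)

/-- The second alternating bilinear form `b₁` of the basic singular pair, with
`b₁(wᵢ, vⱼ) = δ_{ij}` and all other pairings among basis vectors zero. -/
def basicSingB1 (k : Type*) [Field k] (m : ℕ)
    (z w : (Fin (m + 1) → k) × (Fin m → k)) : k :=
  ∑ j : Fin m, (z.1 j.castSucc * w.2 j + w.1 j.castSucc * z.2 j)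

section aux
variable {k : Type*} [Field k] {m : ℕ}

lemma sum_succ_single (i : Fin (m+1)) (f : Fin m → k) :
    (∑ j : Fin m, (if j.succ = i then (1:k) else 0) * f j)
      = if h : (i:ℕ) = 0 then 0 else f ⟨(i:ℕ)-1, by have := i.isLt; omega⟩ := by
  rcases eq_or_ne (i:ℕ) 0 with h0 | h0
  · rw [dif_pos h0]
    apply Finset.sum_eq_zero
    intro j _
    have : ¬ (j.succ = i) := by
      intro hh; apply absurd h0; rw [← hh]; simp
    simp [this]
  · rw [dif_neg h0]
    set j0 : Fin m := ⟨(i:ℕ)-1, by have := i.isLt; omega⟩ with hj0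
    have key : ∀ j : Fin m, (j.succ = i) ↔ (j = j0) := by
      intro j
      simp only [Fin.ext_iff, Fin.val_succ, hj0]
      omega
    simp only [key]
    simp [Finset.sum_ite_eq']

lemma sum_castSucc_single (i : Fin (m+1)) (f : Fin m → k) :
    (∑ j : Fin m, (if j.castSucc = i then (1:k) else 0) * f j)
      = if h : (i:ℕ) < m then f ⟨(i:ℕ), h⟩ else 0 := by
  rcases lt_or_ge (i:ℕ) m with h0 | h0
  · rw [dif_pos h0]
    set j0 : Fin m := ⟨(i:ℕ), h0⟩ with hj0
    have key : ∀ j : Fin m, (j.castSucc = i) ↔ (j = j0) := by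
      intro j
      simp only [Fin.ext_iff, Fin.coe_castSucc, hj0]
    simp only [key]
    simp [Finset.sum_ite_eq']
  · rw [dif_neg (not_lt.mpr h0)]
    apply Finset.sum_eq_zero
    intro j _
    have : ¬ (j.castSucc = i) := by
      intro hh
      have := j.isLt
      apply absurd hh
      simp only [Fin.ext_iff, Fin.coe_castSucc]
      omega
    simp [this]

end aux

/-- For the basic singular pair `(b₀, b₁)` on a `(2m+1)`-dimensional space over a field of
characteristic 2, and `(λ, μ) ≠ (0, 0)`, the radical of `λb₀ + μb₁` is one-dimensional,
spanned by the nonzero vector `Ω(λ,μ) = ∑ᵢ λ^{m-i} μ^i wᵢ`. -/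
theorem radical_of_pencil_member
    (k : Type*) [Field k] [CharP k 2] (m : ℕ) (lam mu : k)
    (h : (lam, mu) ≠ (0, 0)) :
    ((fun i : Fin (m + 1) => lam ^ (m - (i : ℕ)) * mu ^ (i : ℕ), 0)
        : (Fin (m + 1) → k) × (Fin m → k)) ≠ 0 ∧
      ∀ z : (Fin (m + 1) → k) × (Fin m → k),
        (∀ w, lam * basicSingB0 k m z w + mu * basicSingB1 k m z w = 0) ↔
          ∃ c : k, z = c •
            ((fun i : Fin (m + 1) => lam ^ (m - (i : ℕ)) * mu ^ (i : ℕ), 0)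
              : (Fin (m + 1) → k) × (Fin m → k)) := by
  have hlm : lam ≠ 0 ∨ mu ≠ 0 := by
    by_contra hc
    push_neg at hc
    exact h (by simp [hc.1, hc.2])
  constructor
  · -- Ω ≠ 0
    intro hzero
    rw [Prod.ext_iff] at hzero
    have hf := hzero.1
    rcases hlm with hl | hmu
    · have := congrFun hf 0
      simp only [Fin.val_zero, Nat.sub_zero, pow_zero, mul_one, Pi.zero_apply] at this
      exact pow_ne_zero m hl this
    · have := congrFun hf (Fin.last m)
      simp only [Fin.val_last, Nat.sub_self, pow_zero, one_mul, Pi.zero_apply] at this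
      exact pow_ne_zero m hmu this
  · intro z
    constructor
    · intro hz
      -- equations from basis vectors
      have hA : ∀ j : Fin m, lam * z.1 j.succ + mu * z.1 j.castSucc = 0 := by
        intro j
        have h1 := hz ((0 : Fin (m+1) → k), Pi.single j 1)
        simp only [basicSingB0, basicSingB1, Pi.single_apply, Pi.zero_apply, zero_mul,
          add_zero, mul_ite, mul_one, mul_zero, Finset.sum_ite_eq', Finset.mem_univ,
          if_true] at h1
        exact h1
      have hC : ∀ i : Fin (m+1),
          lam * (if h : (i:ℕ) = 0 then 0 else z.2 ⟨(i:ℕ)-1, by have := i.isLt; omega⟩)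
            + mu * (if h : (i:ℕ) < m then z.2 ⟨(i:ℕ), h⟩ else 0) = 0 := by
        intro i
        have h2 := hz (Pi.single i 1, (0 : Fin m → k))
        simp only [basicSingB0, basicSingB1, Pi.single_apply, Pi.zero_apply, mul_zero,
          zero_add] at h2
        rwa [sum_succ_single, sum_castSucc_single] at h2
      -- z.2 = 0
      have h2z : ∀ j : Fin m, z.2 j = 0 := by
        rcases hlm with hl | hmu
        · -- downward induction on m - j
          have key : ∀ n : ℕ, ∀ j : Fin m, m - (j:ℕ) = n → z.2 j = 0 := by
            intro n
            induction n using Nat.strong_induction_on with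
            | _ n ih =>
              intro j hj
              have hc := hC j.succ
              have hv : ((j.succ : Fin (m+1)) : ℕ) = (j:ℕ) + 1 := rfl
              rw [dif_neg (by omega)] at hc
              have hsub : ((j.succ : Fin (m+1)) : ℕ) - 1 = (j:ℕ) := by omega
              have hj2 : (⟨((j.succ : Fin (m+1)) : ℕ) - 1, by have := (j.succ).isLt; omega⟩ : Fin m) = j := by
                simp [Fin.ext_iff, hsub]
              rw [hj2] at hc
              rcases lt_or_ge ((j:ℕ)+1) m with hlt | hge
              · rw [dif_pos (by omega : ((j.succ : Fin (m+1)) : ℕ) < m)] at hc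
                have hz2 : z.2 ⟨((j.succ : Fin (m+1)) : ℕ), by omega⟩ = 0 := by
                  apply ih (m - ((j:ℕ)+1)) (by omega)
                  simp [hv]
                rw [hz2, mul_zero, add_zero] at hc
                exact (mul_eq_zero.mp hc).resolve_left hl
              · rw [dif_neg (by omega)] at hc
                rw [mul_zero, add_zero] at hc
                exact (mul_eq_zero.mp hc).resolve_left hl
          exact fun j => key (m - (j:ℕ)) j rfl
        · -- upward induction on j
          have key : ∀ n : ℕ, ∀ j : Fin m, (j:ℕ) = n → z.2 j = 0 := by
            intro n
            induction n using Nat.strong_induction_on with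
            | _ n ih =>
              intro j hj
              have hc := hC j.castSucc
              have hv : ((j.castSucc : Fin (m+1)) : ℕ) = (j:ℕ) := rfl
              rw [dif_pos (by omega : ((j.castSucc : Fin (m+1)) : ℕ) < m)] at hc
              have hj2 : (⟨((j.castSucc : Fin (m+1)) : ℕ), by omega⟩ : Fin m) = j := by
                simp [Fin.ext_iff, hv]
              rw [hj2] at hc
              rcases eq_or_ne (j:ℕ) 0 with h0 | h0
              · rw [dif_pos (by omega : ((j.castSucc : Fin (m+1)) : ℕ) = 0)] at hc
                rw [mul_zero, zero_add] at hc
                exact (mul_eq_zero.mp hc).resolve_left hmu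
              · rw [dif_neg (by omega)] at hc
                have hz2 : z.2 ⟨((j.castSucc : Fin (m+1)) : ℕ) - 1, by have := j.isLt; omega⟩ = 0 := by
                  apply ih ((j:ℕ) - 1) (by omega)
                  simp [hv]
                rw [hz2, mul_zero, zero_add] at hc
                exact (mul_eq_zero.mp hc).resolve_left hmu
          exact fun j => key (j:ℕ) j rfl
      -- z.1 is a multiple of Ω
      have h2 : (2:k) = 0 := by exact_mod_cast CharP.cast_eq_zero k 2
      have hexist : ∃ c : k, ∀ i : Fin (m+1),
          z.1 i = c * (lam ^ (m - (i:ℕ)) * mu ^ (i:ℕ)) := by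
        by_cases hl : lam ≠ 0
        · refine ⟨z.1 0 / lam ^ m, ?_⟩
          intro i
          induction i using Fin.induction with
          | zero =>
            simp only [Fin.val_zero, Nat.sub_zero, pow_zero, mul_one]
            field_simp
          | succ i ih =>
            have heq : lam * z.1 i.succ = mu * z.1 i.castSucc := by
              have := eq_neg_of_add_eq_zero_left (hA i)
              rwa [CharTwo.neg_eq] at this
            have hs : z.1 i.succ = mu * z.1 i.castSucc / lam := by
              field_simp
              linear_combination heq
            rw [hs, ih]
            have hm : m - (i:ℕ) = (m - ((i:ℕ)+1)) + 1 := by have := i.isLt; omega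
            rw [Fin.val_succ, Fin.coe_castSucc, hm, pow_succ, pow_succ]
            field_simp
        · push_neg at hl
          have hmu : mu ≠ 0 := hlm.resolve_left (by simp [hl])
          have hz1 : ∀ j : Fin m, z.1 j.castSucc = 0 := by
            intro j
            have := hA j
            rw [hl, zero_mul, zero_add] at this
            exact (mul_eq_zero.mp this).resolve_left hmu
          refine ⟨z.1 (Fin.last m) / mu ^ m, ?_⟩
          intro i
          rcases eq_or_ne (i:ℕ) m with hi | hi
          · have hil : i = Fin.last m := Fin.ext hi
            rw [hil]
            simp only [Fin.val_last, Nat.sub_self, pow_zero, one_mul]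
            field_simp
          · have hilt : (i:ℕ) < m := by have := i.isLt; omega
            have : i = (⟨(i:ℕ), hilt⟩ : Fin m).castSucc := Fin.ext rfl
            rw [this, hz1, hl]
            simp only [Fin.coe_castSucc]
            rw [zero_pow (by omega : m - (i:ℕ) ≠ 0)]
            ring
      obtain ⟨c, hc⟩ := hexist
      refine ⟨c, ?_⟩
      rw [Prod.ext_iff]
      constructor
      · funext i
        simp only [Prod.smul_fst, Pi.smul_apply, smul_eq_mul]
        exact hc i
      · funext j
        simp only [Prod.smul_snd, smul_zero, Pi.zero_apply]
        exact h2z j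
    · rintro ⟨c, rfl⟩ w
      have h2 : (2:k) = 0 := by exact_mod_cast CharP.cast_eq_zero k 2
      simp only [basicSingB0, basicSingB1, Prod.smul_fst, Prod.smul_snd, Pi.smul_apply,
        smul_eq_mul, smul_zero, Pi.zero_apply, mul_zero, add_zero]
      rw [Finset.mul_sum, Finset.mul_sum, ← Finset.sum_add_distrib]
      apply Finset.sum_eq_zero
      intro j _
      have hm : m - (j:ℕ) = (m - ((j:ℕ)+1)) + 1 := by have := j.isLt; omega
      rw [Fin.val_succ, Fin.coe_castSucc, hm, pow_succ, pow_succ]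
      linear_combination (lam * c * lam ^ (m - ((j:ℕ)+1)) * (mu ^ (j:ℕ) * mu) * w.2 j) * h2
end

section
/- Let (q₀,q₁) be a pair of quadratic forms in Kronecker normal form on a (2m+1)-dimensional space over a field k of characteristic 2, with half-discriminant coefficients a₀,…,a_n and parameters r₀,…,r_{n-2} (n = 2m+1). Let g be the automorphism of the associated bilinear pair given by parameters s₀,…,s_{n-2}. Then the transformed pair (q₀∘g, q₁∘g) is again in normal form with parameters r'_i, where (identifying r = Σ r_i d_i, s = Σ s_i d_i, r' = Σ r'_i d_i in A = k[T]/(f)) one has r' ≡ r + s² + s mod k. -/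
open Polynomial Finset

/-- The quadratic form `q₀ = ∑ a_{2i} xᵢ² + ∑ x_{i+1} yᵢ + ∑ r_{2i+1} yᵢ²` of a pair in
Kronecker normal form. -/
def nfQ0 (k : Type*) [Field k] (m : ℕ) (a r : ℕ → k)
    (z : (Fin (m + 1) → k) × (Fin m → k)) : k :=
  (∑ i : Fin (m + 1), a (2 * i) * (z.1 i) ^ 2)
    + (∑ i : Fin m, z.1 i.succ * z.2 i)
    + (∑ i : Fin m, r (2 * i + 1) * (z.2 i) ^ 2)

/-- The quadratic form `q₁ = ∑ a_{2i+1} xᵢ² + ∑ xᵢ yᵢ + ∑ r_{2i} yᵢ²` of a pair in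
Kronecker normal form. -/
def nfQ1 (k : Type*) [Field k] (m : ℕ) (a r : ℕ → k)
    (z : (Fin (m + 1) → k) × (Fin m → k)) : k :=
  (∑ i : Fin (m + 1), a (2 * i + 1) * (z.1 i) ^ 2)
    + (∑ i : Fin m, z.1 i.castSucc * z.2 i)
    + (∑ i : Fin m, r (2 * i) * (z.2 i) ^ 2)

/-- The automorphism `g` of the associated pair of bilinear forms determined by the
parameters `s`: `g(wᵢ) = wᵢ`, `g(vᵢ) = vᵢ + ∑ₖ s_{i+k} wₖ`; in coordinates
`g(x, y) = (x' , y)` with `x'ₖ = xₖ + ∑ᵢ s_{i+k} yᵢ`. -/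
def nfG (k : Type*) [Field k] (m : ℕ) (s : ℕ → k)
    (z : (Fin (m + 1) → k) × (Fin m → k)) : (Fin (m + 1) → k) × (Fin m → k) :=
  (fun κ => z.1 κ + ∑ i : Fin m, s ((i : ℕ) + (κ : ℕ)) * z.2 i, z.2)

/-- The half-discriminant polynomial `f(T) = ∑ aᵢ Tⁱ` of degree `n = 2m + 1`. -/
noncomputable def nfF (k : Type*) [Field k] (m : ℕ) (a : ℕ → k) : k[X] :=
  ∑ i ∈ range (2 * m + 2), C (a i) * X ^ i

/-- The basis element `dᵢ = a_{i+1} + a_{i+2} t + ⋯ + aₙ t^{n-1-i}` of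
`A = k[T]/(f)`. -/
noncomputable def nfD (k : Type*) [Field k] (m : ℕ) (a : ℕ → k) (i : ℕ) :
    k[X] ⧸ Ideal.span {nfF k m a} :=
  Ideal.Quotient.mk (Ideal.span {nfF k m a})
    (∑ j ∈ range (2 * m + 1 - i), C (a (i + 1 + j)) * X ^ j)

namespace NFAS

variable {k : Type*} [Field k]

/-- truncated coefficient function -/
def ta (m : ℕ) (a : ℕ → k) (l : ℕ) : k := if l ≤ 2*m+1 then a l else 0

noncomputable def Dp (m : ℕ) (a : ℕ → k) (i : ℕ) : k[X] :=
  ∑ j ∈ range (2 * m + 1 - i), C (a (i + 1 + j)) * X ^ j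

noncomputable def fle (m : ℕ) (a : ℕ → k) (j : ℕ) : k[X] :=
  ∑ u ∈ range (j + 1), C (ta m a u) * X ^ u

noncomputable def F' (m : ℕ) (a : ℕ → k) : k[X] :=
  ∑ i ∈ range (2 * m + 2), C (a i) * X ^ i

lemma F_eq (m : ℕ) (a : ℕ → k) (M : ℕ) (h : 2*m+2 ≤ M) :
    F' m a = ∑ u ∈ range M, C (ta m a u) * X ^ u := by
  rw [← Finset.sum_range_add_sum_Ico _ h]
  have h1 : ∑ u ∈ range (2*m+2), C (ta m a u) * X ^ u = F' m a := by
    refine Finset.sum_congr rfl fun u hu => ?_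
    rw [mem_range] at hu
    rw [ta, if_pos (by omega)]
  have h2 : ∑ u ∈ Ico (2*m+2) M, C (ta m a u) * X ^ u = 0 := by
    refine Finset.sum_eq_zero fun u hu => ?_
    rw [mem_Ico] at hu
    rw [ta, if_neg (by omega), map_zero, zero_mul]
  rw [h1, h2, add_zero]

lemma B (m : ℕ) (a : ℕ → k) (j : ℕ) :
    X ^ (j+1) * Dp m a j + fle m a j = F' m a := by
  rw [F_eq m a (max (j+1) (2*m+2)) (le_max_right _ _),
    ← Finset.sum_range_add_sum_Ico _ (le_max_left (j+1) (2*m+2)), add_comm]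
  congr 1
  rw [Finset.sum_Ico_eq_sum_range, Dp, Finset.mul_sum,
    show max (j+1) (2*m+2) - (j+1) = 2*m+1-j by omega]
  refine Finset.sum_congr rfl fun v hv => ?_
  rw [mem_range] at hv
  rw [ta, if_pos (by omega), pow_add]
  ring




lemma sym_sum {α : Type*} [DecidableEq α] {R : Type*} [CommRing R] [CharP R 2]
    (S : Finset (α × α)) (hS : ∀ p ∈ S, Prod.swap p ∈ S) (g : α × α → R)
    (hg : ∀ p, g (Prod.swap p) = g p) :
    ∑ p ∈ S, g p = ∑ p ∈ S.filter (fun p => p.1 = p.2), g p := by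
  rw [← Finset.sum_filter_add_sum_filter_not S (fun p => p.1 = p.2) g]
  have h0 : ∑ p ∈ S.filter (fun p => ¬ p.1 = p.2), g p = 0 := by
    refine Finset.sum_involution (fun p _ => Prod.swap p) ?_ ?_ ?_ ?_
    · intro p _
      rw [hg]
      exact CharTwo.add_self_eq_zero _
    · intro p hp _
      rw [mem_filter] at hp
      intro hc
      exact hp.2 (congrArg Prod.snd hc ▸ rfl)
    · intro p hp
      rw [mem_filter] at hp ⊢
      refine ⟨hS p hp.1, fun hc => hp.2 ?_⟩
      simpa [eq_comm] using hc
    · intro p _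
      exact Prod.swap_swap p
  rw [h0, add_zero]

variable {k : Type*} [Field k]

lemma key (m : ℕ) (a : ℕ → k) [CharP k 2] (i : ℕ) :
    (Dp m a i) ^ 2 + ∑ j ∈ range (2*i+2), C (ta m a (2*i+1-j)) * Dp m a j
      = F' m a * Dp m a (2*i+1) := by
  haveI : CharP k[X] 2 := charP_of_injective_algebraMap' k (A := k[X]) 2
  have hB : ∀ j : ℕ, X ^ (j+1) * Dp m a j = F' m a + fle m a j := by
    intro j
    have h := B m a j
    rw [← h]; ring_nf
    rw [CharTwo.two_eq_zero, mul_zero, add_zero]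
  apply mul_left_cancel₀ (pow_ne_zero (2*i+2) (X_ne_zero (R := k)))
  have h1 : X ^ (2*i+2) * (Dp m a i) ^ 2 = (F' m a + fle m a i) ^ 2 := by
    rw [show 2*i+2 = (i+1)*2 by ring, pow_mul, ← mul_pow, hB i]
  have h2 : X ^ (2*i+2) * (∑ j ∈ range (2*i+2), C (ta m a (2*i+1-j)) * Dp m a j)
      = F' m a * fle m a (2*i+1)
        + ∑ j ∈ range (2*i+2), ∑ u ∈ range (j+1),
            C (ta m a (2*i+1-j)) * X ^ (2*i+1-j) * (C (ta m a u) * X ^ u) := by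
    rw [Finset.mul_sum]
    have hterm : ∀ j ∈ range (2*i+2),
        X ^ (2*i+2) * (C (ta m a (2*i+1-j)) * Dp m a j)
          = C (ta m a (2*i+1-j)) * X ^ (2*i+1-j) * F' m a
            + ∑ u ∈ range (j+1),
                C (ta m a (2*i+1-j)) * X ^ (2*i+1-j) * (C (ta m a u) * X ^ u) := by
      intro j hj
      rw [mem_range] at hj
      have e1 : 2*i+2 = (2*i+1-j) + (j+1) := by omega
      calc X ^ (2*i+2) * (C (ta m a (2*i+1-j)) * Dp m a j)
          = C (ta m a (2*i+1-j)) * X ^ (2*i+1-j) * (X ^ (j+1) * Dp m a j) := by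
            rw [e1, pow_add]; ring
        _ = C (ta m a (2*i+1-j)) * X ^ (2*i+1-j) * (F' m a + fle m a j) := by rw [hB j]
        _ = C (ta m a (2*i+1-j)) * X ^ (2*i+1-j) * F' m a
            + ∑ u ∈ range (j+1), C (ta m a (2*i+1-j)) * X ^ (2*i+1-j) * (C (ta m a u) * X ^ u) := by
            rw [mul_add, fle, Finset.mul_sum]
    rw [Finset.sum_congr rfl hterm, Finset.sum_add_distrib, ← Finset.sum_mul]
    have hrefl := Finset.sum_range_reflect (fun u => C (ta m a u) * X ^ u) (2*i+2)
    simp only [show ∀ j, 2*i+2-1-j = 2*i+1-j from fun j => by omega] at hrefl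
    have hfle : (∑ j ∈ range (2*i+2), C (ta m a (2*i+1-j)) * X ^ (2*i+1-j)) = fle m a (2*i+1) := by
      simp only [fle]; exact hrefl
    rw [hfle, mul_comm (fle m a (2*i+1)) (F' m a)]
  have h3 : ∑ j ∈ range (2*i+2), ∑ u ∈ range (j+1),
        C (ta m a (2*i+1-j)) * X ^ (2*i+1-j) * (C (ta m a u) * X ^ u)
      = (fle m a i) ^ 2 := by
    have hrefl := Finset.sum_range_reflect
      (fun l => ∑ u ∈ range (2*i+2-l), C (ta m a l) * X ^ l * (C (ta m a u) * X ^ u)) (2*i+2)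
    have hmatch : ∀ j ∈ range (2*i+2),
        ∑ u ∈ range (j+1), C (ta m a (2*i+1-j)) * X ^ (2*i+1-j) * (C (ta m a u) * X ^ u)
          = (fun l => ∑ u ∈ range (2*i+2-l), C (ta m a l) * X ^ l * (C (ta m a u) * X ^ u))
              (2*i+2-1-j) := by
      intro j hj
      rw [mem_range] at hj
      have e1 : 2*i+2-1-j = 2*i+1-j := by omega
      have e2 : 2*i+2-(2*i+1-j) = j+1 := by omega
      simp only [e1, e2]
    rw [Finset.sum_congr rfl hmatch, hrefl]
    -- now: ∑ l ∈ range (2i+2), ∑ u ∈ range (2i+2-l), g (l,u)  = (fle i)^2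
    have hfilter : ∀ l : ℕ, range (2*i+2-l) = (range (2*i+2)).filter (fun u => l + u ≤ 2*i+1) := by
      intro l
      ext u
      simp only [mem_range, mem_filter]
      omega
    have hstep : ∀ l ∈ range (2*i+2),
        ∑ u ∈ range (2*i+2-l), C (ta m a l) * X ^ l * (C (ta m a u) * X ^ u)
          = ∑ u ∈ range (2*i+2),
              if l + u ≤ 2*i+1 then C (ta m a l) * X ^ l * (C (ta m a u) * X ^ u) else 0 := by
      intro l _
      rw [hfilter l, Finset.sum_filter]
    rw [Finset.sum_congr rfl hstep, ← Finset.sum_product']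
    rw [← Finset.sum_filter]
    rw [sym_sum _ ?hswap _ ?hgsym]
    case hswap =>
      intro p hp
      simp only [mem_filter, mem_product, mem_range, Prod.fst_swap, Prod.snd_swap] at hp ⊢
      exact ⟨⟨hp.1.2, hp.1.1⟩, by omega⟩
    case hgsym =>
      intro p
      simp only [Prod.fst_swap, Prod.snd_swap]
      ring
    rw [Finset.sum_nbij' (i := fun p : ℕ × ℕ => p.1) (j := fun l : ℕ => (l, l))
      (t := range (i+1))
      (g := fun l => C (ta m a l) * X ^ l * (C (ta m a l) * X ^ l)) ?hi ?hj ?hli ?hri ?hh]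
    case hi =>
      intro p hp
      simp only [mem_filter, mem_product, mem_range] at hp
      simp only [mem_range]
      omega
    case hj =>
      intro l hl
      simp only [mem_range] at hl
      simp only [mem_filter, mem_product, mem_range]
      exact ⟨⟨⟨by omega, by omega⟩, by omega⟩, trivial⟩
    case hli =>
      intro p hp
      simp only [mem_filter] at hp
      exact Prod.ext rfl hp.2
    case hri =>
      intro l _
      rfl
    case hh =>
      intro p hp
      simp only [mem_filter] at hp
      rw [← hp.2]
    have : ∀ l ∈ range (i+1),
        C (ta m a l) * X ^ l * (C (ta m a l) * X ^ l) = (C (ta m a l) * X ^ l) ^ 2 := by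
      intro l _; ring
    rw [Finset.sum_congr rfl this]
    simp only [fle]
    rw [← sum_pow_char]
  rw [mul_add, h1, h2, h3]
  have hB2 : X ^ (2*i+2) * Dp m a (2*i+1) = F' m a + fle m a (2*i+1) := by
    have := hB (2*i+1)
    rwa [show 2*i+1+1 = 2*i+2 by ring] at this
  calc (F' m a + fle m a i) ^ 2 + (F' m a * fle m a (2*i+1) + (fle m a i) ^ 2)
      = F' m a ^ 2 + F' m a * fle m a (2*i+1) + ((fle m a i) ^ 2 + (fle m a i) ^ 2) := by
        rw [add_pow_char]; ring
    _ = F' m a * (F' m a + fle m a (2*i+1)) := by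
        rw [CharTwo.add_self_eq_zero, add_zero]; ring
    _ = F' m a * (X ^ (2*i+2) * Dp m a (2*i+1)) := by rw [hB2]
    _ = X ^ (2*i+2) * (F' m a * Dp m a (2*i+1)) := by ring
def cp (m : ℕ) (a s : ℕ → k) (j : ℕ) : k :=
  ∑ i ∈ range (2*m), if j ≤ 2*i+1 then ta m a (2*i+1-j) * s i ^ 2 else 0

def cconst (m : ℕ) (a s : ℕ → k) : k := cp m a s (2*m) * a (2*m+1)

lemma Dp_ge (m : ℕ) (a : ℕ → k) (j : ℕ) (h : 2*m+1 ≤ j) : Dp m a j = 0 := by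
  rw [Dp, show 2*m+1-j = 0 by omega]
  simp

lemma Dp_2m (m : ℕ) (a : ℕ → k) : Dp m a (2*m) = C (a (2*m+1)) := by
  rw [Dp, show 2*m+1-2*m = 1 by omega]
  simp

lemma master (m : ℕ) (a s : ℕ → k) [CharP k 2] :
    ∑ j ∈ range (2*m), C (cp m a s j) * Dp m a j + C (cconst m a s)
      = (∑ i ∈ range (2*m), C (s i) * Dp m a i) ^ 2
        + F' m a * ∑ i ∈ range (2*m), C (s i ^ 2) * Dp m a (2*i+1) := by
  haveI : CharP k[X] 2 := charP_of_injective_algebraMap' k (A := k[X]) 2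
  -- square expansion
  have hsq : (∑ i ∈ range (2*m), C (s i) * Dp m a i) ^ 2
      = ∑ i ∈ range (2*m), C (s i ^ 2) * (Dp m a i) ^ 2 := by
    rw [sum_pow_char]
    refine Finset.sum_congr rfl fun i _ => ?_
    rw [mul_pow, ← C_pow]
  -- multiply key by C (s i ^2) and sum
  have hk : ∑ i ∈ range (2*m), C (s i ^ 2) * (F' m a * Dp m a (2*i+1))
      = ∑ i ∈ range (2*m), C (s i ^ 2) * (Dp m a i) ^ 2
        + ∑ i ∈ range (2*m), ∑ j ∈ range (2*i+2),
            C (s i ^ 2) * (C (ta m a (2*i+1-j)) * Dp m a j) := by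
    rw [← Finset.sum_add_distrib]
    refine Finset.sum_congr rfl fun i _ => ?_
    rw [← Finset.mul_sum, ← mul_add, key m a i]
  -- double sum reorganization
  have hds : ∑ i ∈ range (2*m), ∑ j ∈ range (2*i+2),
        C (s i ^ 2) * (C (ta m a (2*i+1-j)) * Dp m a j)
      = ∑ j ∈ range (4*m), C (cp m a s j) * Dp m a j := by
    have hext : ∀ i ∈ range (2*m),
        ∑ j ∈ range (2*i+2), C (s i ^ 2) * (C (ta m a (2*i+1-j)) * Dp m a j)
          = ∑ j ∈ range (4*m),
              if j ≤ 2*i+1 then C (s i ^ 2) * (C (ta m a (2*i+1-j)) * Dp m a j) else 0 := by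
      intro i hi
      rw [mem_range] at hi
      rw [← Finset.sum_filter]
      refine (Finset.sum_congr ?_ fun _ _ => rfl)
      ext j
      simp only [mem_range, mem_filter]
      omega
    rw [Finset.sum_congr rfl hext, Finset.sum_comm]
    refine Finset.sum_congr rfl fun j _ => ?_
    rw [cp, map_sum, Finset.sum_mul]
    refine Finset.sum_congr rfl fun i _ => ?_
    rw [apply_ite C, C_0, ite_mul, zero_mul, C_mul, C_pow]
    by_cases h : j ≤ 2*i+1
    · rw [if_pos h, if_pos h]
      ring
    · rw [if_neg h, if_neg h]
  -- split the j-range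
  have hsplit : ∑ j ∈ range (4*m), C (cp m a s j) * Dp m a j
      = ∑ j ∈ range (2*m), C (cp m a s j) * Dp m a j + C (cconst m a s) := by
    rw [← Finset.sum_range_add_sum_Ico _ (show 2*m ≤ 4*m by omega)]
    congr 1
    rcases Nat.eq_zero_or_pos m with hm | hm
    · subst hm
      simp [cconst, cp]
    · rw [Finset.sum_eq_single_of_mem (2*m) (by rw [mem_Ico]; omega)]
      · rw [Dp_2m, cconst, ← C_mul]
      · intro j hj hne
        rw [mem_Ico] at hj
        rw [Dp_ge m a j (by omega), mul_zero]
  rw [hsq, hsplit.symm, hds.symm]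
  rw [Finset.mul_sum]
  have hsw : ∀ i ∈ range (2*m), F' m a * (C (s i ^2) * Dp m a (2*i+1))
      = C (s i ^2) * (F' m a * Dp m a (2*i+1)) := fun i _ => by ring
  rw [Finset.sum_congr rfl hsw, hk, ← add_assoc, CharTwo.add_self_eq_zero, zero_add]
lemma sum_shift (m p : ℕ) (hp : p < m) (φ : ℕ → k) :
    (∑ i ∈ range (2*m), if p ≤ i ∧ i ≤ p + m then φ i else 0)
      = ∑ κ ∈ range (m+1), φ (p + κ) := by
  rw [← Finset.sum_filter]
  have hf : (range (2*m)).filter (fun i => p ≤ i ∧ i ≤ p + m) = Ico p (p+m+1) := by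
    ext i
    simp only [mem_filter, mem_range, mem_Ico]
    omega
  rw [hf, Finset.sum_Ico_eq_sum_range, show p+m+1-p = m+1 by omega]

lemma cp_odd (m : ℕ) (a s : ℕ → k) (p : ℕ) (hp : p < m) :
    cp m a s (2*p+1) = ∑ κ ∈ range (m+1), a (2*κ) * s (p + κ) ^ 2 := by
  rw [cp]
  have h1 : ∀ i ∈ range (2*m),
      (if 2*p+1 ≤ 2*i+1 then ta m a (2*i+1-(2*p+1)) * s i ^ 2 else 0)
        = (if p ≤ i ∧ i ≤ p + m then a (2*(i-p)) * s i ^ 2 else 0) := by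
    intro i _
    rcases le_or_gt p i with h | h
    · rcases le_or_gt i (p+m) with h2 | h2
      · rw [if_pos (by omega), if_pos ⟨h, h2⟩, ta, if_pos (by omega),
          show 2*i+1-(2*p+1) = 2*(i-p) by omega]
      · rw [if_pos (by omega), if_neg (by omega), ta, if_neg (by omega), zero_mul]
    · rw [if_neg (by omega), if_neg (by omega)]
  rw [Finset.sum_congr rfl h1, sum_shift m p hp]
  refine Finset.sum_congr rfl fun κ _ => ?_
  rw [show 2*((p+κ)-p) = 2*κ by omega]

lemma cp_even (m : ℕ) (a s : ℕ → k) (p : ℕ) (hp : p < m) :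
    cp m a s (2*p) = ∑ κ ∈ range (m+1), a (2*κ+1) * s (p + κ) ^ 2 := by
  rw [cp]
  have h1 : ∀ i ∈ range (2*m),
      (if 2*p ≤ 2*i+1 then ta m a (2*i+1-2*p) * s i ^ 2 else 0)
        = (if p ≤ i ∧ i ≤ p + m then a (2*(i-p)+1) * s i ^ 2 else 0) := by
    intro i _
    rcases le_or_gt p i with h | h
    · rcases le_or_gt i (p+m) with h2 | h2
      · rw [if_pos (by omega), if_pos ⟨h, h2⟩, ta, if_pos (by omega),
          show 2*i+1-2*p = 2*(i-p)+1 by omega]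
      · rw [if_pos (by omega), if_neg (by omega), ta, if_neg (by omega), zero_mul]
    · rw [if_neg (by omega), if_neg (by omega)]
  rw [Finset.sum_congr rfl h1, sum_shift m p hp]
  refine Finset.sum_congr rfl fun κ _ => ?_
  rw [show 2*((p+κ)-p)+1 = 2*κ+1 by omega]
lemma diag (μ : ℕ) [CharP k 2] (c : ℕ → k) (y : Fin μ → k) :
    ∑ i : Fin μ, ∑ j : Fin μ, c ((j:ℕ) + (i:ℕ)) * y j * y i
      = ∑ i : Fin μ, c (2*(i:ℕ)) * (y i) ^ 2 := by
  have h1 : ∑ i : Fin μ, ∑ j : Fin μ, c ((j:ℕ) + (i:ℕ)) * y j * y i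
      = ∑ p ∈ (univ ×ˢ univ : Finset (Fin μ × Fin μ)),
          c ((p.2:ℕ) + (p.1:ℕ)) * y p.2 * y p.1 := by
    rw [Finset.sum_product]
  rw [h1, sym_sum _ ?hswap _ ?hgsym]
  case hswap => intro p _; simp
  case hgsym =>
    intro p
    simp only [Prod.fst_swap, Prod.snd_swap]
    rw [Nat.add_comm]
    ring
  rw [Finset.sum_nbij' (i := fun p : Fin μ × Fin μ => p.1) (j := fun l : Fin μ => (l, l))
    (t := (univ : Finset (Fin μ)))
    (g := fun l : Fin μ => c (2*(l:ℕ)) * (y l)^2) ?hi ?hj ?hli ?hri ?hh]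
  case hi => intro p _; exact mem_univ _
  case hj =>
    intro l _
    simp only [mem_filter, mem_product]
    exact ⟨⟨mem_univ _, mem_univ _⟩, trivial⟩
  case hli =>
    intro p hp
    simp only [mem_filter] at hp
    exact Prod.ext rfl hp.2
  case hri => intro l _; rfl
  case hh =>
    intro p hp
    simp only [mem_filter] at hp
    rw [hp.2, show ((p.2:ℕ) + (p.2:ℕ)) = 2*(p.2:ℕ) by omega]
    ring
lemma form1 (m : ℕ) (a r s : ℕ → k) [CharP k 2] (z : (Fin (m+1) → k) × (Fin m → k)) :
    nfQ1 k m a r (nfG k m s z) = nfQ1 k m a (fun j => r j + s j + cp m a s j) z := by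
  obtain ⟨x, y⟩ := z
  simp only [nfQ1, nfG]
  have hA : ∀ κ : Fin (m+1), a (2*(κ:ℕ)+1) * (x κ + ∑ i : Fin m, s ((i:ℕ) + (κ:ℕ)) * y i) ^ 2
      = a (2*(κ:ℕ)+1) * x κ ^ 2
        + ∑ i : Fin m, a (2*(κ:ℕ)+1) * (s ((i:ℕ)+(κ:ℕ)) ^ 2 * y i ^ 2) := by
    intro κ
    rw [add_pow_char, mul_add]
    congr 1
    rw [sum_pow_char, Finset.mul_sum]
    exact Finset.sum_congr rfl fun i _ => by rw [mul_pow]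
  have hB : ∀ i : Fin m,
      (x i.castSucc + ∑ j : Fin m, s ((j:ℕ) + ((i.castSucc : Fin (m+1)):ℕ)) * y j) * y i
        = x i.castSucc * y i + ∑ j : Fin m, s ((j:ℕ) + (i:ℕ)) * y j * y i := by
    intro i
    rw [add_mul, Finset.sum_mul]
    simp only [Fin.coe_castSucc]
  rw [Finset.sum_congr rfl (fun κ _ => hA κ), Finset.sum_add_distrib,
    Finset.sum_congr rfl (fun i _ => hB i), Finset.sum_add_distrib]
  have hC : ∑ κ : Fin (m+1), ∑ i : Fin m, a (2*(κ:ℕ)+1) * (s ((i:ℕ)+(κ:ℕ)) ^ 2 * y i ^ 2)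
      = ∑ i : Fin m, cp m a s (2*(i:ℕ)) * y i ^ 2 := by
    rw [Finset.sum_comm]
    refine Finset.sum_congr rfl fun i _ => ?_
    rw [cp_even m a s (i:ℕ) i.isLt, Finset.sum_mul,
      ← Fin.sum_univ_eq_sum_range (fun κ => a (2*κ+1) * s ((i:ℕ)+κ) ^ 2 * y i ^ 2) (m+1)]
    exact Finset.sum_congr rfl fun κ _ => by ring
  have hD : ∑ i : Fin m, ∑ j : Fin m, s ((j:ℕ)+(i:ℕ)) * y j * y i
      = ∑ i : Fin m, s (2*(i:ℕ)) * y i ^ 2 := diag m s y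
  have hR : ∑ i : Fin m, (r (2*(i:ℕ)) + s (2*(i:ℕ)) + cp m a s (2*(i:ℕ))) * y i ^ 2
      = ∑ i : Fin m, r (2*(i:ℕ)) * y i ^ 2 + (∑ i : Fin m, s (2*(i:ℕ)) * y i ^ 2
        + ∑ i : Fin m, cp m a s (2*(i:ℕ)) * y i ^ 2) := by
    rw [← Finset.sum_add_distrib, ← Finset.sum_add_distrib]
    exact Finset.sum_congr rfl fun i _ => by ring
  rw [hC, hD, hR]
  ring

lemma form0 (m : ℕ) (a r s : ℕ → k) [CharP k 2] (z : (Fin (m+1) → k) × (Fin m → k)) :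
    nfQ0 k m a r (nfG k m s z) = nfQ0 k m a (fun j => r j + s j + cp m a s j) z := by
  obtain ⟨x, y⟩ := z
  simp only [nfQ0, nfG]
  have hA : ∀ κ : Fin (m+1), a (2*(κ:ℕ)) * (x κ + ∑ i : Fin m, s ((i:ℕ) + (κ:ℕ)) * y i) ^ 2
      = a (2*(κ:ℕ)) * x κ ^ 2
        + ∑ i : Fin m, a (2*(κ:ℕ)) * (s ((i:ℕ)+(κ:ℕ)) ^ 2 * y i ^ 2) := by
    intro κ
    rw [add_pow_char, mul_add]
    congr 1
    rw [sum_pow_char, Finset.mul_sum]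
    exact Finset.sum_congr rfl fun i _ => by rw [mul_pow]
  have hB : ∀ i : Fin m,
      (x i.succ + ∑ j : Fin m, s ((j:ℕ) + ((i.succ : Fin (m+1)):ℕ)) * y j) * y i
        = x i.succ * y i + ∑ j : Fin m, s ((j:ℕ) + (i:ℕ) + 1) * y j * y i := by
    intro i
    rw [add_mul, Finset.sum_mul]
    congr 1
  rw [Finset.sum_congr rfl (fun κ _ => hA κ), Finset.sum_add_distrib,
    Finset.sum_congr rfl (fun i _ => hB i), Finset.sum_add_distrib]
  have hC : ∑ κ : Fin (m+1), ∑ i : Fin m, a (2*(κ:ℕ)) * (s ((i:ℕ)+(κ:ℕ)) ^ 2 * y i ^ 2)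
      = ∑ i : Fin m, cp m a s (2*(i:ℕ)+1) * y i ^ 2 := by
    rw [Finset.sum_comm]
    refine Finset.sum_congr rfl fun i _ => ?_
    rw [cp_odd m a s (i:ℕ) i.isLt, Finset.sum_mul,
      ← Fin.sum_univ_eq_sum_range (fun κ => a (2*κ) * s ((i:ℕ)+κ) ^ 2 * y i ^ 2) (m+1)]
    exact Finset.sum_congr rfl fun κ _ => by ring
  have hD : ∑ i : Fin m, ∑ j : Fin m, s ((j:ℕ)+(i:ℕ)+1) * y j * y i
      = ∑ i : Fin m, s (2*(i:ℕ)+1) * y i ^ 2 := diag m (fun t => s (t+1)) y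
  have hR : ∑ i : Fin m, (r (2*(i:ℕ)+1) + s (2*(i:ℕ)+1) + cp m a s (2*(i:ℕ)+1)) * y i ^ 2
      = ∑ i : Fin m, r (2*(i:ℕ)+1) * y i ^ 2 + (∑ i : Fin m, s (2*(i:ℕ)+1) * y i ^ 2
        + ∑ i : Fin m, cp m a s (2*(i:ℕ)+1) * y i ^ 2) := by
    rw [← Finset.sum_add_distrib, ← Finset.sum_add_distrib]
    exact Finset.sum_congr rfl fun i _ => by ring
  rw [hC, hD, hR]
  ring
lemma quot (m : ℕ) (a r s : ℕ → k) [CharP k 2] :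
    ∑ i ∈ range (2*m), (r i + s i + cp m a s i) • nfD k m a i
      = ∑ i ∈ range (2*m), r i • nfD k m a i
        + (∑ i ∈ range (2*m), s i • nfD k m a i) ^ 2
        + (∑ i ∈ range (2*m), s i • nfD k m a i)
        + (cconst m a s) • (1 : k[X] ⧸ Ideal.span {nfF k m a}) := by
  haveI : CharP k[X] 2 := charP_of_injective_algebraMap' k (A := k[X]) 2
  set I : Ideal k[X] := Ideal.span {nfF k m a} with hI
  have hsmul : ∀ (t : k) (p : k[X]),
      t • (Ideal.Quotient.mk I p) = Ideal.Quotient.mk I (C t * p) := by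
    intro t p
    rw [show t • (Ideal.Quotient.mk I p) = Ideal.Quotient.mk I (t • p) from rfl,
      smul_eq_C_mul]
  have hsum : ∀ (c : ℕ → k),
      ∑ i ∈ range (2*m), c i • nfD k m a i
        = Ideal.Quotient.mk I (∑ i ∈ range (2*m), C (c i) * Dp m a i) := by
    intro c
    rw [map_sum]
    exact Finset.sum_congr rfl fun i _ => hsmul (c i) (Dp m a i)
  have hone : (cconst m a s) • (1 : k[X] ⧸ I) = Ideal.Quotient.mk I (C (cconst m a s) * 1) := by
    rw [show (1 : k[X] ⧸ I) = Ideal.Quotient.mk I 1 from rfl, hsmul]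
  rw [hsum (fun i => r i + s i + cp m a s i), hsum r, hsum s, hone,
    ← map_pow, ← map_add, ← map_add, ← map_add, Ideal.Quotient.mk_eq_mk_iff_sub_mem, hI,
    Ideal.mem_span_singleton]
  refine ⟨∑ i ∈ range (2*m), C (s i ^ 2) * Dp m a (2*i+1), ?_⟩
  have hm := master m a s
  rw [show F' m a = nfF k m a from rfl] at hm
  have hL : (∑ i ∈ range (2*m), C (r i + s i + cp m a s i) * Dp m a i)
      = ∑ i ∈ range (2*m), C (r i) * Dp m a i + ∑ i ∈ range (2*m), C (s i) * Dp m a i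
        + ∑ i ∈ range (2*m), C (cp m a s i) * Dp m a i := by
    rw [← Finset.sum_add_distrib, ← Finset.sum_add_distrib]
    refine Finset.sum_congr rfl fun i _ => ?_
    rw [C_add, C_add]
    ring
  rw [hL]
  have h2 : (2 : k[X]) = 0 := CharTwo.two_eq_zero
  linear_combination hm - C (cconst m a s) * h2

end NFAS

/-- Transformation of the normal form under an automorphism of the associated pair of
bilinear forms: if `(q₀, q₁)` is a regular pair in Kronecker normal form with parameters
`r`, and `g` is the automorphism with parameters `s`, then `(q₀ ∘ g, q₁ ∘ g)` is again in
normal form with parameters `r'` satisfying `r' ≡ r + s² + s mod k` in `A = k[T]/(f)`,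
where `r = ∑ rᵢ dᵢ`, `s = ∑ sᵢ dᵢ`, `r' = ∑ r'ᵢ dᵢ`. -/
theorem normal_form_artin_schreier_transformation
    (k : Type*) [Field k] [CharP k 2] (m : ℕ) (a r s : ℕ → k)
    (hsep : (nfF k m a).Separable) (han : a (2 * m + 1) ≠ 0) :
    ∃ (r' : ℕ → k) (c : k),
      (∀ z, nfQ0 k m a r (nfG k m s z) = nfQ0 k m a r' z) ∧
      (∀ z, nfQ1 k m a r (nfG k m s z) = nfQ1 k m a r' z) ∧
      ∑ i ∈ range (2 * m), r' i • nfD k m a i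
        = ∑ i ∈ range (2 * m), r i • nfD k m a i
          + (∑ i ∈ range (2 * m), s i • nfD k m a i) ^ 2
          + (∑ i ∈ range (2 * m), s i • nfD k m a i)
          + c • (1 : k[X] ⧸ Ideal.span {nfF k m a}) := by
  refine ⟨fun j => r j + s j + NFAS.cp m a s j, NFAS.cconst m a s, ?_, ?_, ?_⟩
  · exact fun z => NFAS.form0 m a r s z
  · exact fun z => NFAS.form1 m a r s z
  · exact NFAS.quot m a r s
end

section
/- Let k be a field of characteristic 2, E a vector space of dimension 3 with a quadratic form q = Σ_{1≤i≤j≤3} a_{ij} x_i x_j. Then the half-discriminant of q equals a₁₁a₂₃² + a₂₂a₁₃² + a₃₃a₁₂² + a₁₂a₂₃a₁₃, and the projective conic V(q) ⊂ P² is smooth if and only if this quantity is nonzero. -/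
/-- For a ternary quadratic form `q = ∑ aᵢⱼ xᵢ xⱼ` over an algebraically closed field of
characteristic 2, the half-discriminant `q(ω)` (where `ω = (a₂₃, a₁₃, a₁₂)` is the vector
of Pfaffians of the polar form) equals
`a₁₁a₂₃² + a₂₂a₁₃² + a₃₃a₁₂² + a₁₂a₂₃a₁₃`, and the projective conic `V(q) ⊆ ℙ²` is smooth
(has no nonzero singular vector) if and only if this quantity is nonzero. -/
theorem half_discriminant_ternary
    (k : Type*) [Field k] [IsAlgClosed k] [CharP k 2]
    (a11 a22 a33 a12 a13 a23 : k)
    (q : (Fin 3 → k) → k)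
    (hq : ∀ v, q v = a11 * (v 0) ^ 2 + a22 * (v 1) ^ 2 + a33 * (v 2) ^ 2
      + a12 * (v 0) * (v 1) + a13 * (v 0) * (v 2) + a23 * (v 1) * (v 2)) :
    q ![a23, a13, a12]
        = a11 * a23 ^ 2 + a22 * a13 ^ 2 + a33 * a12 ^ 2 + a12 * a23 * a13 ∧
      ((a11 * a23 ^ 2 + a22 * a13 ^ 2 + a33 * a12 ^ 2 + a12 * a23 * a13 ≠ 0) ↔
        ∀ v : Fin 3 → k, v ≠ 0 →
          ¬(q v = 0 ∧ ∀ w, q (v + w) - q v - q w = 0)) := by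
  have h2 : (2 : k) = 0 := by exact_mod_cast CharP.cast_eq_zero k 2
  have hω : q ![a23, a13, a12]
      = a11 * a23 ^ 2 + a22 * a13 ^ 2 + a33 * a12 ^ 2 + a12 * a23 * a13 := by
    rw [hq]
    simp only [Matrix.cons_val_zero, Matrix.cons_val_one, Matrix.head_cons,
      Matrix.cons_val_two, Matrix.tail_cons]
    linear_combination (a12 * a13 * a23) * h2
  have hB : ∀ v w : Fin 3 → k, q (v + w) - q v - q w
      = a12 * (v 0 * w 1 + v 1 * w 0) + a13 * (v 0 * w 2 + v 2 * w 0)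
        + a23 * (v 1 * w 2 + v 2 * w 1) := by
    intro v w
    simp only [hq, Pi.add_apply]
    linear_combination (a11 * v 0 * w 0 + a22 * v 1 * w 1 + a33 * v 2 * w 2) * h2
  refine ⟨hω, ?_, ?_⟩
  · -- D ≠ 0 → smooth
    intro hD v hv ⟨hqv, hrad⟩
    have e1 : a12 * v 1 + a13 * v 2 = 0 := by
      have := hrad ![1, 0, 0]; rw [hB] at this; simpa using this
    have e2 : a12 * v 0 + a23 * v 2 = 0 := by
      have := hrad ![0, 1, 0]; rw [hB] at this; simpa using this
    have e3 : a13 * v 0 + a23 * v 1 = 0 := by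
      have := hrad ![0, 0, 1]; rw [hB] at this; simpa using this
    have sq0 : ∀ x : k, x ^ 2 = 0 → x = 0 := fun x hx =>
      pow_eq_zero_iff two_ne_zero |>.mp hx
    by_cases h23 : a23 ≠ 0
    · have key : a23 ^ 2 * q v
          = (v 0) ^ 2 * (a11 * a23 ^ 2 + a22 * a13 ^ 2 + a33 * a12 ^ 2 + a12 * a23 * a13) := by
        rw [hq]
        linear_combination (a22 * (a23 * v 1 - a13 * v 0)) * e3
          + (a33 * (a23 * v 2 - a12 * v 0) + a23 * (a23 * v 1 + a13 * v 0)) * e2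
          - (a12 * a13 * a23 * (v 0) ^ 2) * h2
      have hv0 : v 0 = 0 := by
        rw [hqv, mul_zero] at key
        exact sq0 _ ((mul_eq_zero.mp key.symm).resolve_right hD)
      have hv2 : v 2 = 0 := by
        have := e2; rw [hv0, mul_zero, zero_add] at this
        exact (mul_eq_zero.mp this).resolve_left h23
      have hv1 : v 1 = 0 := by
        have := e3; rw [hv0, mul_zero, zero_add] at this
        exact (mul_eq_zero.mp this).resolve_left h23
      exact hv (funext fun i => by fin_cases i <;> assumption)
    · push_neg at h23
      by_cases h13 : a13 ≠ 0
      · have key : a13 ^ 2 * q v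
            = (v 1) ^ 2 * (a11 * a23 ^ 2 + a22 * a13 ^ 2 + a33 * a12 ^ 2 + a12 * a23 * a13) := by
          rw [hq]
          linear_combination (a11 * (a13 * v 0 - a23 * v 1)) * e3
            + (a33 * (a13 * v 2 - a12 * v 1) + a13 * (a13 * v 0 + a23 * v 1)) * e1
            - (a12 * a23 * a13 * (v 1) ^ 2) * h2
        have hv1 : v 1 = 0 := by
          rw [hqv, mul_zero] at key
          exact sq0 _ ((mul_eq_zero.mp key.symm).resolve_right hD)
        have hv0 : v 0 = 0 := by
          have := e3; rw [hv1, h23, zero_mul, add_zero] at this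
          exact (mul_eq_zero.mp this).resolve_left h13
        have hv2 : v 2 = 0 := by
          have := e1; rw [hv1, mul_zero, zero_add] at this
          exact (mul_eq_zero.mp this).resolve_left h13
        exact hv (funext fun i => by fin_cases i <;> assumption)
      · push_neg at h13
        by_cases h12 : a12 ≠ 0
        · have key : a12 ^ 2 * q v
              = (v 2) ^ 2 * (a11 * a23 ^ 2 + a22 * a13 ^ 2 + a33 * a12 ^ 2 + a12 * a23 * a13) := by
            rw [hq]
            linear_combination (a11 * (a12 * v 0 - a23 * v 2)) * e2
              + (a22 * (a12 * v 1 - a13 * v 2) + a12 * (a12 * v 0 + a23 * v 2)) * e1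
              - (a13 * a23 * a12 * (v 2) ^ 2) * h2
          have hv2 : v 2 = 0 := by
            rw [hqv, mul_zero] at key
            exact sq0 _ ((mul_eq_zero.mp key.symm).resolve_right hD)
          have hv1 : v 1 = 0 := by
            have := e1; rw [hv2, h13, zero_mul, add_zero] at this
            exact (mul_eq_zero.mp this).resolve_left h12
          have hv0 : v 0 = 0 := by
            have := e2; rw [hv2, h23, zero_mul, add_zero] at this
            exact (mul_eq_zero.mp this).resolve_left h12
          exact hv (funext fun i => by fin_cases i <;> assumption)
        · push_neg at h12
          exact hD (by rw [h12, h13, h23]; ring)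
  · -- smooth → D ≠ 0
    intro hsm
    by_contra hD
    by_cases hω0 : a12 = 0 ∧ a13 = 0 ∧ a23 = 0
    · obtain ⟨h12, h13, h23⟩ := hω0
      obtain ⟨b0, hb0⟩ := IsAlgClosed.exists_pow_nat_eq a11 (n := 2) two_pos
      obtain ⟨b1, hb1⟩ := IsAlgClosed.exists_pow_nat_eq a22 (n := 2) two_pos
      by_cases hb : b0 = 0 ∧ b1 = 0
      · refine hsm ![1, 0, 0] ?_ ⟨?_, ?_⟩
        · intro h
          have := congrFun h 0
          simp at this
        · rw [hq]
          simp only [Matrix.cons_val_zero, Matrix.cons_val_one, Matrix.head_cons,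
            Matrix.cons_val_two, Matrix.tail_cons]
          rw [← hb0, hb.1]
          ring
        · intro w
          rw [hB]
          simp only [Matrix.cons_val_zero, Matrix.cons_val_one, Matrix.head_cons,
            Matrix.cons_val_two, Matrix.tail_cons, h12, h13, h23]
          ring
      · refine hsm ![b1, b0, 0] ?_ ⟨?_, ?_⟩
        · intro h
          apply hb
          constructor
          · have := congrFun h 1; simpa using this
          · have := congrFun h 0; simpa using this
        · rw [hq]
          simp only [Matrix.cons_val_zero, Matrix.cons_val_one, Matrix.head_cons,
            Matrix.cons_val_two, Matrix.tail_cons]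
          rw [← hb0, ← hb1, h12, h13, h23]
          linear_combination (b0 ^ 2 * b1 ^ 2) * h2
        · intro w
          rw [hB]
          simp only [Matrix.cons_val_zero, Matrix.cons_val_one, Matrix.head_cons,
            Matrix.cons_val_two, Matrix.tail_cons, h12, h13, h23]
          ring
    · refine hsm ![a23, a13, a12] ?_ ⟨by rw [hω, hD], ?_⟩
      · intro h
        apply hω0
        refine ⟨?_, ?_, ?_⟩
        · have := congrFun h 2; simpa using this
        · have := congrFun h 1; simpa using this
        · have := congrFun h 0; simpa using this
      · intro w
        rw [hB]
        simp only [Matrix.cons_val_zero, Matrix.cons_val_one, Matrix.head_cons,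
          Matrix.cons_val_two, Matrix.tail_cons]
        linear_combination (a12 * a13 * w 0 + a12 * a23 * w 1 + a13 * a23 * w 2) * h2
end

section
/- Let k be a field of characteristic 2 and E of dimension n = 2m+1 with a regular pencil of quadratic forms q₀, q₁ in Kronecker normal form with coefficients a₀,…,a_n. Then the half-discriminant of the pencil satisfies Δ(t₀,t₁) = (t₀q₀ + t₁q₁)(Ω(t₀,t₁)) = Σ_{i=0}^{2m+1} a_i t₀^{2m+1-i} t₁^i, where Ω(t₀,t₁) = (t₀^m, t₀^{m-1}t₁, …, t₁^m, 0, …, 0) in the Kronecker basis. -/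
open Polynomial Finset

lemma sum_range_two_mul' {M : Type*} [AddCommMonoid M] (f : ℕ → M) (n : ℕ) :
    ∑ i ∈ range (2 * n), f i = ∑ i ∈ range n, (f (2 * i) + f (2 * i + 1)) := by
  induction n with
  | zero => simp
  | succ n ih =>
    have : 2 * (n + 1) = (2 * n + 1) + 1 := by ring
    rw [this, Finset.sum_range_succ, Finset.sum_range_succ, ih, Finset.sum_range_succ,
      add_assoc]

/-- For a regular pencil in Kronecker normal form, the half-discriminant of the pencil
satisfies `Δ(t₀,t₁) = (t₀q₀ + t₁q₁)(Ω(t₀,t₁)) = ∑ᵢ aᵢ t₀^{2m+1-i} t₁^i`, where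
`Ω(t₀,t₁) = (t₀^m, t₀^{m-1}t₁, …, t₁^m, 0, …, 0)` in the Kronecker basis. -/
theorem half_discriminant_of_pencil
    (k : Type*) [Field k] [CharP k 2] (m : ℕ) (a r : ℕ → k)
    (hsep : (nfF k m a).Separable) (han : a (2 * m + 1) ≠ 0)
    (t0 t1 : k) :
    t0 * nfQ0 k m a r (fun i => t0 ^ (m - (i : ℕ)) * t1 ^ (i : ℕ), 0)
        + t1 * nfQ1 k m a r (fun i => t0 ^ (m - (i : ℕ)) * t1 ^ (i : ℕ), 0)
      = ∑ i ∈ range (2 * m + 2), a i * t0 ^ (2 * m + 1 - i) * t1 ^ i := by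
  have h22 : 2 * m + 2 = 2 * (m + 1) := by ring
  rw [h22, sum_range_two_mul']
  simp only [nfQ0, nfQ1, Pi.zero_apply, mul_zero, zero_mul, Finset.sum_const_zero,
    add_zero, mul_pow, zero_pow, OfNat.ofNat_ne_zero, ne_eq, not_false_eq_true]
  rw [Fin.sum_univ_eq_sum_range (fun i => a (2 * i) * ((t0 ^ (m - i)) ^ 2 * (t1 ^ i) ^ 2)),
    Fin.sum_univ_eq_sum_range (fun i => a (2 * i + 1) * ((t0 ^ (m - i)) ^ 2 * (t1 ^ i) ^ 2))]
  rw [Finset.mul_sum, Finset.mul_sum, ← Finset.sum_add_distrib]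
  refine Finset.sum_congr rfl fun i hi => ?_
  rw [Finset.mem_range] at hi
  have h1 : 2 * m + 1 - 2 * i = 2 * (m - i) + 1 := by omega
  have h2 : 2 * m + 1 - (2 * i + 1) = 2 * (m - i) := by omega
  rw [h1, h2]
  ring
end
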